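/- arXiv:2201.05741 — 4 statements merged into one kernel-verified Lean document; each statement's English description precedes it below -/
import Mathlib

section
/- Under the sketch-and-project setup, for every realization of the sketching matrices and every k ≥ 0, the transformed error β_k := B^{1/2}(x_k − x*) lies in row(AB^{-1/2}), and β_{k+1} = β_k − Q_{k+1}Q_{k+1}^⊤β_k for any matrix Q_{k+1} whose columns form an orthonormal basis of row(S_{k+1}^⊤AB^{-1/2}). -/
open MeasureTheory ProbabilityTheory Matrix Finset Filter

noncomputable section

/-- The Moore–Penrose pseudoinverse of a real matrix, defined via classical choice
as a matrix satisfying the four Penrose equations (such a matrix exists and is unique). -/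
noncomputable def mpinv {a b : ℕ} (M : Matrix (Fin a) (Fin b) ℝ) : Matrix (Fin b) (Fin a) ℝ :=
  Classical.epsilon fun X => M * X * M = M ∧ X * M * X = X ∧ (M * X)ᵀ = M * X ∧ (X * M)ᵀ = X * M

/-- The Euclidean norm of a vector in `Fin a → ℝ`. -/
noncomputable def nrm2 {a : ℕ} (v : Fin a → ℝ) : ℝ := Real.sqrt (∑ i, v i ^ 2)

/-- The spectral norm (ℓ₂ operator norm) of a matrix. -/
noncomputable def specNorm {a b : ℕ} (M : Matrix (Fin a) (Fin b) ℝ) : ℝ :=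
  sInf {c | 0 ≤ c ∧ ∀ v, nrm2 (M *ᵥ v) ≤ c * nrm2 v}

/-- The row space of a matrix, as a submodule of `Fin b → ℝ`. -/
def rowSpace {a b : ℕ} (M : Matrix (Fin a) (Fin b) ℝ) : Submodule ℝ (Fin b → ℝ) :=
  Submodule.span ℝ (Set.range M)

/-- The column space of a matrix, as a submodule of `Fin a → ℝ`. -/
def colSpace {a b : ℕ} (M : Matrix (Fin a) (Fin b) ℝ) : Submodule ℝ (Fin a → ℝ) :=
  rowSpace Mᵀ

/-- One step of the sketch-and-project iteration:
`x ↦ x − B⁻¹Aᵀ Sₖ (Sₖᵀ A B⁻¹ Aᵀ Sₖ)† Sₖᵀ (A x − b)`. -/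
noncomputable def spStep {m n p : ℕ} (A : Matrix (Fin m) (Fin n) ℝ)
    (B : Matrix (Fin n) (Fin n) ℝ) (b : Fin m → ℝ)
    (Sk : Matrix (Fin m) (Fin p) ℝ) (xk : Fin n → ℝ) : Fin n → ℝ :=
  xk - (B⁻¹ * Aᵀ * Sk * mpinv (Skᵀ * A * B⁻¹ * Aᵀ * Sk) * Skᵀ) *ᵥ (A *ᵥ xk - b)

instance matrixMeasurableSpace {a b : ℕ} : MeasurableSpace (Matrix (Fin a) (Fin b) ℝ) :=
  MeasurableSpace.pi

/-- The `(C, ω)` sub-exponential Johnson–Lindenstrauss property of a random `m × p` matrix. -/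
def jlProperty {m p : ℕ} {Ω : Type*} [MeasurableSpace Ω] (μ : Measure Ω)
    (S : Ω → Matrix (Fin m) (Fin p) ℝ) (C ω : ℝ) : Prop :=
  0 < C ∧ 0 < ω ∧ ∀ z : Fin m → ℝ,
    (∀ t : ℝ, |t| ≤ 1 / ω →
      ∫ a, Real.exp (t * (nrm2 ((S a)ᵀ *ᵥ z) ^ 2 - nrm2 z ^ 2)) ∂μ ≤
        Real.exp (t ^ 2 * nrm2 z ^ 4 / (2 * C * p))) ∧
    (∀ δ : ℝ, 0 < δ →
      μ {a | δ * nrm2 z ^ 2 < |nrm2 ((S a)ᵀ *ᵥ z) ^ 2 - nrm2 z ^ 2|} ≤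
        ENNReal.ofReal (2 * Real.exp (-min (C * p * δ ^ 2) (C * p * δ / ω))))

/-- `σ`-algebra generated by the sketching matrices `S₁, …, S_j`. -/
def sigmaF {m p : ℕ} {Ω : Type*} [MeasurableSpace Ω]
    (S : ℕ → Ω → Matrix (Fin m) (Fin p) ℝ) (j : ℕ) : MeasurableSpace Ω :=
  ⨆ i ∈ Finset.Icc 1 j, MeasurableSpace.comap (S i) inferInstance

/-- The smallest nonzero singular value of a matrix. -/
noncomputable def sigmaMinPos {a b : ℕ} (M : Matrix (Fin a) (Fin b) ℝ) : ℝ :=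
  sInf {c | ∃ v ∈ rowSpace M, v ≠ 0 ∧ c = nrm2 (M *ᵥ v) / nrm2 v}


/-! ### Auxiliary lemmas -/

theorem exists_pinv_aux {p : ℕ} (M : Matrix (Fin p) (Fin p) ℝ) (hM : Mᵀ = M) :
    ∃ X, M * X * M = M ∧ X * M * X = X ∧ (M * X)ᵀ = M * X ∧ (X * M)ᵀ = X * M := by
  have hH : M.IsHermitian := by
    rw [Matrix.IsHermitian, Matrix.conjTranspose]
    ext i j
    exact (congrFun (congrFun hM j) i).symm
  set U : Matrix (Fin p) (Fin p) ℝ := (hH.eigenvectorUnitary : Matrix (Fin p) (Fin p) ℝ) with hU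
  set d : Fin p → ℝ := hH.eigenvalues with hd
  have hspec : M = U * diagonal d * Uᵀ := by
    have := hH.spectral_theorem
    simpa [hU, hd, Matrix.star_eq_conjTranspose, Matrix.conjTranspose_eq_transpose_of_trivial] using this
  have hUU : Uᵀ * U = 1 := by
    have := (Matrix.mem_unitaryGroup_iff').mp hH.eigenvectorUnitary.2
    simpa [Matrix.star_eq_conjTranspose] using this
  have sandwich : ∀ f g : Fin p → ℝ,
      (U * diagonal f * Uᵀ) * (U * diagonal g * Uᵀ) = U * diagonal (f * g) * Uᵀ := by
    intro f g
    rw [Matrix.mul_assoc (U * diagonal f), ← Matrix.mul_assoc Uᵀ, ← Matrix.mul_assoc Uᵀ, hUU,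
      Matrix.one_mul, ← Matrix.mul_assoc, Matrix.mul_assoc U, Matrix.diagonal_mul_diagonal]
    rfl
  have symm : ∀ f : Fin p → ℝ, (U * diagonal f * Uᵀ)ᵀ = U * diagonal f * Uᵀ := by
    intro f
    rw [Matrix.transpose_mul, Matrix.transpose_mul, Matrix.transpose_transpose,
      Matrix.diagonal_transpose, Matrix.mul_assoc]
  set e : Fin p → ℝ := fun i => (d i)⁻¹ with he
  have h1 : d * e * d = d := by
    funext i
    rcases eq_or_ne (d i) 0 with h | h <;> simp [he, h]
  have h2 : e * d * e = e := by
    funext i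
    rcases eq_or_ne (d i) 0 with h | h <;> simp [he, h]
  refine ⟨U * diagonal e * Uᵀ, ?_, ?_, ?_, ?_⟩
  · rw [hspec, sandwich, sandwich, h1]
  · rw [hspec, sandwich, sandwich, h2]
  · rw [hspec, sandwich, symm]
  · rw [hspec, sandwich, symm]

theorem mpinv_spec_aux {p : ℕ} (M : Matrix (Fin p) (Fin p) ℝ) (hM : Mᵀ = M) :
    M * mpinv M * M = M ∧ mpinv M * M * mpinv M = mpinv M ∧
      (M * mpinv M)ᵀ = M * mpinv M ∧ (mpinv M * M)ᵀ = mpinv M * M :=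
  Classical.epsilon_spec (exists_pinv_aux M hM)

theorem tmulself_eq_zero_aux {a b : ℕ} {E : Matrix (Fin a) (Fin b) ℝ} (h : Eᵀ * E = 0) :
    E = 0 := by
  ext i j
  have hj := congrFun (congrFun h j) j
  simp only [Matrix.mul_apply, Matrix.transpose_apply, Matrix.zero_apply] at hj
  have := (Finset.sum_eq_zero_iff_of_nonneg (fun k _ => mul_self_nonneg (E k j))).mp hj i
    (Finset.mem_univ i)
  simpa [mul_self_eq_zero] using this

theorem rowSpace_eq_range_aux {a b : ℕ} (W : Matrix (Fin a) (Fin b) ℝ) :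
    rowSpace W = LinearMap.range Wᵀ.mulVecLin := by
  rw [Matrix.range_mulVecLin, rowSpace]
  rfl

theorem dot_mulVec_left_aux {a b : ℕ} (W : Matrix (Fin a) (Fin b) ℝ) (u : Fin a → ℝ)
    (w : Fin b → ℝ) : (Wᵀ *ᵥ u) ⬝ᵥ w = u ⬝ᵥ (W *ᵥ w) := by
  rw [Matrix.mulVec_transpose, ← Matrix.dotProduct_mulVec]

theorem decomp_aux {a b : ℕ} (W : Matrix (Fin a) (Fin b) ℝ) (v : Fin b → ℝ) :
    ∃ u w, W *ᵥ w = 0 ∧ v = Wᵀ *ᵥ u + w := by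
  set R := LinearMap.range Wᵀ.mulVecLin with hR
  set K := LinearMap.ker W.mulVecLin with hK
  have hinf : R ⊓ K = ⊥ := by
    rw [eq_bot_iff]
    rintro v ⟨⟨u, rfl⟩, hv2⟩
    have hv2' : W *ᵥ (Wᵀ *ᵥ u) = 0 := hv2
    have : (Wᵀ *ᵥ u) ⬝ᵥ (Wᵀ *ᵥ u) = 0 := by
      rw [dot_mulVec_left_aux, hv2', dotProduct_zero]
    rw [dotProduct_self_eq_zero] at this
    simp only [Submodule.mem_bot, Matrix.mulVecLin_apply]
    exact this
  have hrank : Module.finrank ℝ R = Module.finrank ℝ (LinearMap.range W.mulVecLin) := by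
    have := Matrix.rank_transpose W
    simpa [Matrix.rank] using this
  have hsum : Module.finrank ℝ R + Module.finrank ℝ K = Module.finrank ℝ (Fin b → ℝ) := by
    rw [hrank]
    exact LinearMap.finrank_range_add_finrank_ker W.mulVecLin
  have htop : R ⊔ K = ⊤ := by
    apply Submodule.eq_top_of_finrank_eq
    have := Submodule.finrank_sup_add_finrank_inf_eq R K
    rw [hinf] at this
    simp only [finrank_bot, add_zero] at this
    rw [this, hsum]
  have hv : v ∈ R ⊔ K := htop ▸ Submodule.mem_top
  rcases Submodule.mem_sup.mp hv with ⟨y, hy, w, hw, rfl⟩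
  rcases hy with ⟨u, rfl⟩
  exact ⟨u, w, hw, rfl⟩

theorem key_pinv_aux {a b : ℕ} (W : Matrix (Fin a) (Fin b) ℝ) (X : Matrix (Fin a) (Fin a) ℝ)
    (hp1 : (W * Wᵀ) * X * (W * Wᵀ) = W * Wᵀ) : Wᵀ * X * (W * Wᵀ) = Wᵀ := by
  set Y := X * (W * Wᵀ) with hY
  have h3 : (W * Wᵀ) * Y = W * Wᵀ := by rw [hY, ← Matrix.mul_assoc]; exact hp1
  have e1 : W * (Wᵀ * Y) = W * Wᵀ := by rw [← Matrix.mul_assoc]; exact h3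
  have hE : (Wᵀ * Y - Wᵀ)ᵀ * (Wᵀ * Y - Wᵀ) = 0 := by
    rw [Matrix.transpose_sub, Matrix.transpose_mul, Matrix.transpose_transpose,
      Matrix.sub_mul, Matrix.mul_sub, Matrix.mul_sub,
      Matrix.mul_assoc Yᵀ W (Wᵀ * Y), e1]
    simp only [Matrix.mul_assoc]
    abel
  have hE0 := tmulself_eq_zero_aux hE
  have h4 : Wᵀ * Y = Wᵀ := sub_eq_zero.mp hE0
  rw [Matrix.mul_assoc, ← hY, h4]

theorem rowSpace_mul_le_aux {a b c : ℕ} (N : Matrix (Fin a) (Fin b) ℝ)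
    (M : Matrix (Fin b) (Fin c) ℝ) : rowSpace (N * M) ≤ rowSpace M := by
  rw [rowSpace, rowSpace_eq_range_aux, Submodule.span_le]
  rintro - ⟨i, rfl⟩
  refine ⟨N i, ?_⟩
  ext j
  simp [Matrix.mulVecLin, Matrix.mulVec, Matrix.mul_apply, dotProduct, Matrix.vecMul,
    Matrix.transpose_apply, mul_comm]

theorem mem_rowSpace_of_orth_aux {a b : ℕ} (M : Matrix (Fin a) (Fin b) ℝ) (v : Fin b → ℝ)
    (h : ∀ w, M *ᵥ w = 0 → v ⬝ᵥ w = 0) : v ∈ rowSpace M := by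
  obtain ⟨u, w, hw, rfl⟩ := decomp_aux M v
  have h1 : (Mᵀ *ᵥ u) ⬝ᵥ w = 0 := by rw [dot_mulVec_left_aux, hw, dotProduct_zero]
  have h2 : (Mᵀ *ᵥ u + w) ⬝ᵥ w = 0 := h _ hw
  rw [add_dotProduct, h1, zero_add, dotProduct_self_eq_zero] at h2
  rw [h2, add_zero, rowSpace_eq_range_aux]
  exact ⟨u, rfl⟩

theorem proj_eq_aux {a b q : ℕ} (W : Matrix (Fin a) (Fin b) ℝ)
    (Q : Matrix (Fin b) (Fin q) ℝ) (hQ1 : Qᵀ * Q = 1)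
    (hQ2 : colSpace Q = rowSpace W) (v : Fin b → ℝ) :
    (Wᵀ * mpinv (W * Wᵀ) * W) *ᵥ v = (Q * Qᵀ) *ᵥ v := by
  set X := mpinv (W * Wᵀ) with hX
  have hMt : (W * Wᵀ)ᵀ = W * Wᵀ := by rw [Matrix.transpose_mul, Matrix.transpose_transpose]
  obtain ⟨hp1, -, -, -⟩ := mpinv_spec_aux (W * Wᵀ) hMt
  have key : Wᵀ * X * (W * Wᵀ) = Wᵀ := key_pinv_aux W X hp1
  obtain ⟨u, w, hw, rfl⟩ := decomp_aux W v
  have hP1 : (Wᵀ * X * W) *ᵥ (Wᵀ *ᵥ u) = Wᵀ *ᵥ u := by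
    rw [Matrix.mulVec_mulVec, Matrix.mul_assoc (Wᵀ * X), key]
  have hP2 : (Wᵀ * X * W) *ᵥ w = 0 := by
    rw [Matrix.mul_assoc, ← Matrix.mulVec_mulVec, ← Matrix.mulVec_mulVec, hw,
      Matrix.mulVec_zero, Matrix.mulVec_zero]
  have hmem : Wᵀ *ᵥ u ∈ LinearMap.range Q.mulVecLin := by
    have : Wᵀ *ᵥ u ∈ rowSpace W := by
      rw [rowSpace_eq_range_aux]; exact ⟨u, rfl⟩
    rw [← hQ2] at this
    rwa [colSpace, rowSpace_eq_range_aux, Matrix.transpose_transpose] at this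
  obtain ⟨c, hc⟩ := hmem
  rw [Matrix.mulVecLin_apply] at hc
  have hQP1 : (Q * Qᵀ) *ᵥ (Wᵀ *ᵥ u) = Wᵀ *ᵥ u := by
    rw [← hc, Matrix.mulVec_mulVec, Matrix.mul_assoc, hQ1, Matrix.mul_one]
  have hQw : Qᵀ *ᵥ w = 0 := by
    funext j
    have hcol : Qᵀ j ∈ rowSpace W := by
      rw [← hQ2]
      exact Submodule.subset_span ⟨j, rfl⟩
    rw [rowSpace_eq_range_aux] at hcol
    obtain ⟨c', hc'⟩ := hcol
    rw [Matrix.mulVecLin_apply] at hc'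
    show Qᵀ j ⬝ᵥ w = (0 : Fin q → ℝ) j
    rw [← hc', dot_mulVec_left_aux, hw, dotProduct_zero]
    rfl
  have hQP2 : (Q * Qᵀ) *ᵥ w = 0 := by
    rw [← Matrix.mulVec_mulVec, hQw, Matrix.mulVec_zero]
  rw [Matrix.mulVec_add, Matrix.mulVec_add, hP1, hP2, hQP1, hQP2]

/-- For every realization and every `k`, the transformed error
`β_k := B^{1/2}(x_k − x*)` lies in `row(AB^{-1/2})`, and
`β_{k+1} = β_k − Q_{k+1}Q_{k+1}ᵀ β_k` for any matrix `Q_{k+1}` whose columns form an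
orthonormal basis of `row(S_{k+1}ᵀ A B^{-1/2})`. -/
theorem stmt2 {m n p : ℕ} (A : Matrix (Fin m) (Fin n) ℝ) (b : Fin m → ℝ)
    (hconsistent : ∃ y, A *ᵥ y = b)
    (B Bhalf : Matrix (Fin n) (Fin n) ℝ) (hB : B.PosDef)
    (hBsymm : Bhalfᵀ = Bhalf) (hBsq : Bhalf * Bhalf = B)
    (S : ℕ → Matrix (Fin m) (Fin p) ℝ)
    (x₀ : Fin n → ℝ) (x : ℕ → Fin n → ℝ)
    (hx0 : x 0 = x₀) (hxrec : ∀ k, x (k + 1) = spStep A B b (S (k + 1)) (x k))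
    (xstar : Fin n → ℝ) (hsol : A *ᵥ xstar = b)
    (hproj : ∀ y, A *ᵥ y = b →
      nrm2 (Bhalf *ᵥ (x₀ - xstar)) ≤ nrm2 (Bhalf *ᵥ (x₀ - y))) :
    ∀ k, Bhalf *ᵥ (x k - xstar) ∈ rowSpace (A * Bhalf⁻¹) ∧
      ∀ (q : ℕ) (Q : Matrix (Fin n) (Fin q) ℝ), Qᵀ * Q = 1 →
        colSpace Q = rowSpace ((S (k + 1))ᵀ * A * Bhalf⁻¹) →
        Bhalf *ᵥ (x (k + 1) - xstar) =
          Bhalf *ᵥ (x k - xstar) - (Q * Qᵀ) *ᵥ (Bhalf *ᵥ (x k - xstar)) := by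
  have hdetB : B.det ≠ 0 := ne_of_gt hB.det_pos
  have hdetBh : Bhalf.det ≠ 0 := by
    intro h
    apply hdetB
    rw [← hBsq, Matrix.det_mul, h, mul_zero]
  have hBh1 : Bhalf * Bhalf⁻¹ = 1 := Matrix.mul_nonsing_inv _ (isUnit_iff_ne_zero.mpr hdetBh)
  have hBh2 : Bhalf⁻¹ * Bhalf = 1 := Matrix.nonsing_inv_mul _ (isUnit_iff_ne_zero.mpr hdetBh)
  have hBinv : B⁻¹ = Bhalf⁻¹ * Bhalf⁻¹ := by rw [← hBsq, Matrix.mul_inv_rev]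
  have hBhinvT : (Bhalf⁻¹)ᵀ = Bhalf⁻¹ := by
    rw [Matrix.transpose_nonsing_inv, hBsymm]
  set W : ℕ → Matrix (Fin p) (Fin n) ℝ := fun k => (S (k + 1))ᵀ * A * Bhalf⁻¹ with hW
  have hWt : ∀ k, (W k)ᵀ = Bhalf⁻¹ * (Aᵀ * S (k + 1)) := by
    intro k
    rw [hW]
    simp only [Matrix.transpose_mul, Matrix.transpose_transpose, hBhinvT, Matrix.mul_assoc]
  have hWWt : ∀ k, (S (k + 1))ᵀ * A * B⁻¹ * Aᵀ * S (k + 1) = W k * (W k)ᵀ := by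
    intro k
    rw [hWt, hW, hBinv]
    simp only [Matrix.mul_assoc]
  -- the recurrence in terms of W
  have hrec : ∀ k, Bhalf *ᵥ (x (k + 1) - xstar) =
      Bhalf *ᵥ (x k - xstar) -
        ((W k)ᵀ * mpinv (W k * (W k)ᵀ) * W k) *ᵥ (Bhalf *ᵥ (x k - xstar)) := by
    intro k
    rw [hxrec k, spStep]
    have hb : A *ᵥ x k - b = A *ᵥ (x k - xstar) := by rw [Matrix.mulVec_sub, hsol]
    rw [hb, sub_right_comm, Matrix.mulVec_sub]
    congr 1
    simp only [Matrix.mulVec_mulVec]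
    congr 1
    rw [hWWt k]
    simp only [hW, Matrix.transpose_mul, Matrix.transpose_transpose, hBhinvT, hBinv,
      Matrix.mul_assoc]
    rw [hBh2, Matrix.mul_one, ← Matrix.mul_assoc Bhalf Bhalf⁻¹, hBh1, Matrix.one_mul]
  -- rowSpace of W k is contained in rowSpace (A * Bhalf⁻¹)
  have hWle : ∀ k, rowSpace (W k) ≤ rowSpace (A * Bhalf⁻¹) := by
    intro k
    show rowSpace ((S (k + 1))ᵀ * A * Bhalf⁻¹) ≤ rowSpace (A * Bhalf⁻¹)
    rw [Matrix.mul_assoc]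
    exact rowSpace_mul_le_aux _ _
  -- base case
  have hbase : Bhalf *ᵥ (x₀ - xstar) ∈ rowSpace (A * Bhalf⁻¹) := by
    apply mem_rowSpace_of_orth_aux
    intro w hw
    set β := Bhalf *ᵥ (x₀ - xstar) with hβ
    have hz : A *ᵥ (Bhalf⁻¹ *ᵥ w) = 0 := by rw [Matrix.mulVec_mulVec]; exact hw
    have hBz : Bhalf *ᵥ (Bhalf⁻¹ *ᵥ w) = w := by
      rw [Matrix.mulVec_mulVec, hBh1, Matrix.one_mulVec]
    have hineq : ∀ t : ℝ, nrm2 β ≤ nrm2 (β - t • w) := by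
      intro t
      have hsolt : A *ᵥ (xstar + t • (Bhalf⁻¹ *ᵥ w)) = b := by
        rw [Matrix.mulVec_add, hsol, Matrix.mulVec_smul, hz, smul_zero, add_zero]
      have hp := hproj _ hsolt
      have harg : Bhalf *ᵥ (x₀ - (xstar + t • (Bhalf⁻¹ *ᵥ w))) = β - t • w := by
        have h0 : x₀ - (xstar + t • (Bhalf⁻¹ *ᵥ w)) = (x₀ - xstar) - t • (Bhalf⁻¹ *ᵥ w) := by
          abel
        rw [h0, Matrix.mulVec_sub, Matrix.mulVec_smul, hBz]
      rw [harg] at hp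
      exact hp
    have hsq : ∀ t : ℝ, ∑ i, β i ^ 2 ≤ ∑ i, (β i - t * w i) ^ 2 := by
      intro t
      have h := hineq t
      rw [nrm2, nrm2] at h
      have hy : (0 : ℝ) ≤ ∑ i, (β i - t * w i) ^ 2 := by positivity
      simp only [Pi.sub_apply, Pi.smul_apply, smul_eq_mul] at h
      exact (Real.sqrt_le_sqrt_iff hy).mp h
    have hdots : β ⬝ᵥ w = ∑ i, β i * w i := rfl
    have expand : ∀ t : ℝ, ∑ i, (β i - t * w i) ^ 2 =
        (∑ i, β i ^ 2) - 2 * t * (β ⬝ᵥ w) + t ^ 2 * ∑ i, w i ^ 2 := by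
      intro t
      rw [hdots, Finset.mul_sum, Finset.mul_sum, ← Finset.sum_sub_distrib,
        ← Finset.sum_add_distrib]
      exact Finset.sum_congr rfl fun i _ => by ring
    have hkey : ∀ t : ℝ, 0 ≤ - 2 * t * (β ⬝ᵥ w) + t ^ 2 * ∑ i, w i ^ 2 := by
      intro t
      have := hsq t
      rw [expand t] at this
      linarith
    rcases eq_or_ne (∑ i, w i ^ 2) 0 with hq | hq
    · have hw0 : w = 0 := by
        funext i
        have := (Finset.sum_eq_zero_iff_of_nonneg
          (fun j _ => sq_nonneg (w j))).mp hq i (Finset.mem_univ i)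
        exact pow_eq_zero_iff (two_ne_zero (α := ℕ)) |>.mp this
      rw [hw0, dotProduct_zero]
    · have hqpos : 0 < ∑ i, w i ^ 2 :=
        lt_of_le_of_ne (Finset.sum_nonneg fun i _ => sq_nonneg (w i)) (Ne.symm hq)
      have ht := hkey ((β ⬝ᵥ w) / (∑ i, w i ^ 2))
      have heq : -2 * ((β ⬝ᵥ w) / (∑ i, w i ^ 2)) * (β ⬝ᵥ w)
          + ((β ⬝ᵥ w) / (∑ i, w i ^ 2)) ^ 2 * (∑ i, w i ^ 2)
          = -((β ⬝ᵥ w) ^ 2 / (∑ i, w i ^ 2)) := by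
        field_simp
        ring
      rw [heq] at ht
      have h3 : (β ⬝ᵥ w) ^ 2 / (∑ i, w i ^ 2) ≤ 0 := by linarith
      have h4 : (β ⬝ᵥ w) ^ 2 ≤ 0 := by
        by_contra hcon
        push_neg at hcon
        have := div_pos hcon hqpos
        linarith
      have h5 : (β ⬝ᵥ w) ^ 2 = 0 := le_antisymm h4 (sq_nonneg _)
      exact pow_eq_zero_iff (two_ne_zero (α := ℕ)) |>.mp h5
  -- membership for all k, by induction
  have hmem : ∀ k, Bhalf *ᵥ (x k - xstar) ∈ rowSpace (A * Bhalf⁻¹) := by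
    intro k
    induction k with
    | zero => rw [hx0]; exact hbase
    | succ k ih =>
      rw [hrec k]
      apply Submodule.sub_mem _ ih
      apply hWle k
      rw [Matrix.mul_assoc, ← Matrix.mulVec_mulVec, rowSpace_eq_range_aux]
      exact ⟨_, rfl⟩
  intro k
  refine ⟨hmem k, ?_⟩
  intro q Q hQ1 hQ2
  rw [hrec k, proj_eq_aux (W k) Q hQ1 hQ2]

end
end

section
/- Let x₀ ∈ ℝ^n and let {x_k} be the sketch-and-project iterates with arbitrary sketching matrices {S_k}. On the event {τ₁ < ∞}, there exists γ₁ ∈ (0,1), which is a measurable function of (Q₁,…,Q_{τ₁}), such that ‖x_{τ₁} − x*‖_B ≤ γ₁ ‖x₀ − x*‖_B. -/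
open MeasureTheory ProbabilityTheory Matrix Finset Filter

noncomputable section

-- ===================== Auxiliary lemmas =====================

section Aux

lemma myCT {a b : ℕ} (M : Matrix (Fin a) (Fin b) ℝ) : Mᴴ = Mᵀ :=
  conjTranspose_eq_transpose_of_trivial M

lemma exists_pinv_symm {a : ℕ} {G : Matrix (Fin a) (Fin a) ℝ} (hG : Gᵀ = G) :
    ∃ X : Matrix (Fin a) (Fin a) ℝ,
      G * X * G = G ∧ X * G * X = X ∧ (G * X)ᵀ = G * X ∧ (X * G)ᵀ = X * G := by
  have hH : G.IsHermitian := by rw [Matrix.IsHermitian, myCT, hG]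
  set U : Matrix (Fin a) (Fin a) ℝ := (hH.eigenvectorUnitary : Matrix (Fin a) (Fin a) ℝ) with hU
  have hUU : U * Uᵀ = 1 := by
    have := (Matrix.mem_unitaryGroup_iff).mp hH.eigenvectorUnitary.2
    rwa [Matrix.star_eq_conjTranspose, myCT] at this
  have hUU' : Uᵀ * U = 1 := by
    have := (Matrix.mem_unitaryGroup_iff').mp hH.eigenvectorUnitary.2
    rwa [Matrix.star_eq_conjTranspose, myCT] at this
  set d : Fin a → ℝ := hH.eigenvalues with hd
  have hspec : G = U * Matrix.diagonal d * Uᵀ := by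
    have := hH.spectral_theorem
    rw [Unitary.conjStarAlgAut_apply, Matrix.star_eq_conjTranspose, myCT] at this
    exact this
  have key : ∀ f g : Fin a → ℝ, (U * Matrix.diagonal f * Uᵀ) * (U * Matrix.diagonal g * Uᵀ)
      = U * Matrix.diagonal (fun i => f i * g i) * Uᵀ := by
    intro f g
    have : U * Matrix.diagonal f * Uᵀ * (U * Matrix.diagonal g * Uᵀ)
        = U * (Matrix.diagonal f * (Uᵀ * U) * Matrix.diagonal g) * Uᵀ := by
      simp only [Matrix.mul_assoc]
    rw [this, hUU', Matrix.mul_one, Matrix.diagonal_mul_diagonal]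
  have symkey : ∀ f : Fin a → ℝ, (U * Matrix.diagonal f * Uᵀ)ᵀ = U * Matrix.diagonal f * Uᵀ := by
    intro f
    rw [Matrix.transpose_mul, Matrix.transpose_mul, Matrix.transpose_transpose,
      Matrix.diagonal_transpose, Matrix.mul_assoc]
  have hfun1 : (fun i => d i * (d i)⁻¹ * d i) = d := by
    funext i
    rcases eq_or_ne (d i) 0 with h | h
    · simp [h]
    · field_simp
  refine ⟨U * Matrix.diagonal (fun i => (d i)⁻¹) * Uᵀ, ?_, ?_, ?_, ?_⟩
  · rw [hspec, key, key, hfun1]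
  · rw [hspec, key, key]
    have : (fun i => (d i)⁻¹ * d i * (d i)⁻¹) = fun i => (d i)⁻¹ := by
      funext i
      rcases eq_or_ne (d i) 0 with h | h
      · simp [h]
      · field_simp
    rw [this]
  · rw [hspec, key, symkey]
  · rw [hspec, key, symkey]

lemma pinv_unique {a : ℕ} {G X Y : Matrix (Fin a) (Fin a) ℝ}
    (h1 : G * X * G = G) (h2 : X * G * X = X) (h3 : (G * X)ᵀ = G * X) (h4 : (X * G)ᵀ = X * G)
    (k1 : G * Y * G = G) (k2 : Y * G * Y = Y) (k3 : (G * Y)ᵀ = G * Y) (k4 : (Y * G)ᵀ = Y * G) :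
    X = Y := by
  simp only [Matrix.mul_assoc] at h1 h2 k1 k2
  simp only [Matrix.transpose_mul] at h3 h4 k3 k4
  have e1 : Gᵀ = Gᵀ * (G * Y) := by
    calc Gᵀ = (G * (Y * G))ᵀ := by rw [k1]
    _ = Gᵀ * (Yᵀ * Gᵀ) := by simp only [Matrix.transpose_mul, Matrix.mul_assoc]
    _ = Gᵀ * (G * Y) := by rw [k3]
  have e2 : Gᵀ = X * G * Gᵀ := by
    calc Gᵀ = (G * (X * G))ᵀ := by rw [h1]
    _ = Gᵀ * Xᵀ * Gᵀ := by simp only [Matrix.transpose_mul, Matrix.mul_assoc]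
    _ = X * G * Gᵀ := by rw [h4]
  have hX : X = X * (G * Y) := by
    calc X = X * (G * X) := h2.symm
    _ = X * (Xᵀ * Gᵀ) := by rw [h3]
    _ = X * (Xᵀ * (Gᵀ * (G * Y))) := by rw [← e1]
    _ = X * (Xᵀ * Gᵀ) * (G * Y) := by simp only [Matrix.mul_assoc]
    _ = X * (G * X) * (G * Y) := by rw [h3]
    _ = X * (G * Y) := by rw [h2]
  have hY : Y = X * (G * Y) := by
    calc Y = Y * (G * Y) := k2.symm
    _ = (Y * G) * Y := by simp only [Matrix.mul_assoc]
    _ = (Gᵀ * Yᵀ) * Y := by rw [k4]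
    _ = (X * G * Gᵀ) * Yᵀ * Y := by conv_lhs => rw [e2]
    _ = (X * G) * (Gᵀ * Yᵀ) * Y := by simp only [Matrix.mul_assoc]
    _ = (X * G) * (Y * G) * Y := by rw [k4]
    _ = X * (G * (Y * (G * Y))) := by simp only [Matrix.mul_assoc]
    _ = X * (G * Y) := by rw [k2]
  rw [hX, ← hY]

lemma mpinv_spec {a : ℕ} {G : Matrix (Fin a) (Fin a) ℝ} (hG : Gᵀ = G) :
    G * mpinv G * G = G ∧ mpinv G * G * mpinv G = mpinv G ∧
      (G * mpinv G)ᵀ = G * mpinv G ∧ (mpinv G * G)ᵀ = mpinv G * G :=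
  Classical.epsilon_spec (exists_pinv_symm hG)

lemma mpinv_symm {a : ℕ} {G : Matrix (Fin a) (Fin a) ℝ} (hG : Gᵀ = G) :
    (mpinv G)ᵀ = mpinv G := by
  obtain ⟨h1, h2, h3, h4⟩ := mpinv_spec hG
  refine pinv_unique ?_ ?_ ?_ ?_ h1 h2 h3 h4
  · calc G * (mpinv G)ᵀ * G = (Gᵀ * mpinv G * Gᵀ)ᵀ := by
          simp only [Matrix.transpose_mul, Matrix.transpose_transpose, Matrix.mul_assoc]
    _ = G := by rw [hG, h1, hG]
  · calc (mpinv G)ᵀ * G * (mpinv G)ᵀ = (mpinv G * Gᵀ * mpinv G)ᵀ := by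
          simp only [Matrix.transpose_mul, Matrix.transpose_transpose, Matrix.mul_assoc]
    _ = (mpinv G)ᵀ := by rw [hG, h2]
  · calc (G * (mpinv G)ᵀ)ᵀ = mpinv G * G := by
          simp only [Matrix.transpose_mul, Matrix.transpose_transpose, hG]
    _ = (mpinv G * G)ᵀ := h4.symm
    _ = G * (mpinv G)ᵀ := by rw [Matrix.transpose_mul, hG]
  · calc ((mpinv G)ᵀ * G)ᵀ = G * mpinv G := by
          simp only [Matrix.transpose_mul, Matrix.transpose_transpose, hG]
    _ = (G * mpinv G)ᵀ := h3.symm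
    _ = (mpinv G)ᵀ * G := by rw [Matrix.transpose_mul, hG]

lemma gram_symm {c r : ℕ} (M : Matrix (Fin c) (Fin r) ℝ) : (M * Mᵀ)ᵀ = M * Mᵀ := by
  rw [Matrix.transpose_mul, Matrix.transpose_transpose]

/-- `G Gi M = M` for `G = M Mᵀ`. -/
lemma GGiM {c r : ℕ} (M : Matrix (Fin c) (Fin r) ℝ) :
    (M * Mᵀ) * mpinv (M * Mᵀ) * M = M := by
  obtain ⟨h1, h2, h3, h4⟩ := mpinv_spec (gram_symm M)
  set K : Matrix (Fin c) (Fin c) ℝ := 1 - (M * Mᵀ) * mpinv (M * Mᵀ) with hKdef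
  have hKG : K * (M * Mᵀ) = 0 := by
    rw [hKdef, Matrix.sub_mul, Matrix.one_mul, h1, sub_self]
  have hKsym : Kᵀ = K := by
    rw [hKdef, Matrix.transpose_sub, Matrix.transpose_one, h3]
  have hKM : K * M = 0 := by
    have h0 : (K * M) * (K * M)ᴴ = 0 := by
      rw [myCT, Matrix.transpose_mul, hKsym]
      calc K * M * (Mᵀ * K) = (K * (M * Mᵀ)) * K := by simp only [Matrix.mul_assoc]
      _ = 0 := by rw [hKG, Matrix.zero_mul]
    exact self_mul_conjTranspose_eq_zero.mp h0
  have := hKM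
  rw [hKdef, Matrix.sub_mul, Matrix.one_mul, sub_eq_zero] at this
  exact this.symm

/-- The orthogonal projector onto the row space of `M`. -/
noncomputable def projP {c r : ℕ} (M : Matrix (Fin c) (Fin r) ℝ) : Matrix (Fin r) (Fin r) ℝ :=
  Mᵀ * mpinv (M * Mᵀ) * M

lemma projP_symm {c r : ℕ} (M : Matrix (Fin c) (Fin r) ℝ) : (projP M)ᵀ = projP M := by
  unfold projP
  simp only [Matrix.transpose_mul, Matrix.transpose_transpose, mpinv_symm (gram_symm M),
    Matrix.mul_assoc]

lemma projP_idem {c r : ℕ} (M : Matrix (Fin c) (Fin r) ℝ) : projP M * projP M = projP M := by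
  obtain ⟨h1, h2, h3, h4⟩ := mpinv_spec (gram_symm M)
  unfold projP
  calc Mᵀ * mpinv (M * Mᵀ) * M * (Mᵀ * mpinv (M * Mᵀ) * M)
      = Mᵀ * (mpinv (M * Mᵀ) * (M * Mᵀ) * mpinv (M * Mᵀ)) * M := by
        simp only [Matrix.mul_assoc]
  _ = Mᵀ * mpinv (M * Mᵀ) * M := by rw [h2, Matrix.mul_assoc]

lemma M_mul_projP {c r : ℕ} (M : Matrix (Fin c) (Fin r) ℝ) : M * projP M = M := by
  unfold projP
  calc M * (Mᵀ * mpinv (M * Mᵀ) * M) = (M * Mᵀ) * mpinv (M * Mᵀ) * M := by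
        simp only [Matrix.mul_assoc]
  _ = M := GGiM M

lemma dot_self_nonneg {r : ℕ} (v : Fin r → ℝ) : 0 ≤ v ⬝ᵥ v :=
  Finset.sum_nonneg fun _ _ => mul_self_nonneg _

lemma projP_dot {c r : ℕ} (M : Matrix (Fin c) (Fin r) ℝ) (v : Fin r → ℝ) :
    (projP M *ᵥ v) ⬝ᵥ (projP M *ᵥ v) = v ⬝ᵥ (projP M *ᵥ v) := by
  calc (projP M *ᵥ v) ⬝ᵥ (projP M *ᵥ v) = ((projP M *ᵥ v) ᵥ* projP M) ⬝ᵥ v :=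
        dotProduct_mulVec _ _ _
  _ = ((projP M)ᵀ *ᵥ (projP M *ᵥ v)) ⬝ᵥ v := by
        rw [Matrix.mulVec_transpose]
  _ = (projP M *ᵥ v) ⬝ᵥ v := by
        rw [Matrix.mulVec_mulVec, projP_symm, projP_idem]
  _ = v ⬝ᵥ (projP M *ᵥ v) := dotProduct_comm _ _

lemma projP_step_dot {c r : ℕ} (M : Matrix (Fin c) (Fin r) ℝ) (v : Fin r → ℝ) :
    (v - projP M *ᵥ v) ⬝ᵥ (v - projP M *ᵥ v)
      = v ⬝ᵥ v - (projP M *ᵥ v) ⬝ᵥ (projP M *ᵥ v) := by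
  have h1 := projP_dot M v
  have h2 : (projP M *ᵥ v) ⬝ᵥ v = v ⬝ᵥ (projP M *ᵥ v) := dotProduct_comm _ _
  simp only [sub_dotProduct, dotProduct_sub]
  linarith

lemma projP_mulVec_zero {c r : ℕ} (M : Matrix (Fin c) (Fin r) ℝ) (v : Fin r → ℝ)
    (h : projP M *ᵥ v = 0) : M *ᵥ v = 0 := by
  have h2 : M *ᵥ v = (M * projP M) *ᵥ v := by rw [M_mul_projP]
  rw [h2, ← Matrix.mulVec_mulVec, h, Matrix.mulVec_zero]

lemma nrm2_nonneg {r : ℕ} (v : Fin r → ℝ) : 0 ≤ nrm2 v := Real.sqrt_nonneg _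

lemma nrm2_sq {r : ℕ} (v : Fin r → ℝ) : nrm2 v ^ 2 = v ⬝ᵥ v := by
  rw [nrm2, Real.sq_sqrt (Finset.sum_nonneg fun i _ => sq_nonneg _)]
  simp [dotProduct, sq]

lemma nrm2_zero {r : ℕ} : nrm2 (0 : Fin r → ℝ) = 0 := by simp [nrm2]

lemma nrm2_pos {r : ℕ} {v : Fin r → ℝ} (h : v ≠ 0) : 0 < nrm2 v := by
  rcases lt_or_eq_of_le (nrm2_nonneg v) with h' | h'
  · exact h'
  · exfalso
    apply h
    have hd : v ⬝ᵥ v = 0 := by rw [← nrm2_sq, ← h']; ring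
    exact dotProduct_self_eq_zero.mp hd

lemma dot_le_of_nrm2_le {r : ℕ} {u v : Fin r → ℝ} (h : nrm2 u ≤ nrm2 v) :
    u ⬝ᵥ u ≤ v ⬝ᵥ v := by
  rw [← nrm2_sq, ← nrm2_sq]
  exact pow_le_pow_left₀ (nrm2_nonneg u) h 2

lemma dot_eq_zero_of_mem_rowSpace {c r : ℕ} {M : Matrix (Fin c) (Fin r) ℝ} {v : Fin r → ℝ}
    (h : M *ᵥ v = 0) {w : Fin r → ℝ} (hw : w ∈ rowSpace M) : w ⬝ᵥ v = 0 := by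
  induction hw using Submodule.span_induction with
  | mem w hw =>
      obtain ⟨i, rfl⟩ := hw
      exact congrFun h i
  | zero => exact zero_dotProduct v
  | add _ _ _ _ ha hb => rw [add_dotProduct, ha, hb, add_zero]
  | smul c _ _ hc => rw [smul_dotProduct, hc, smul_zero]

lemma core_contraction {r q : ℕ} (M : ℕ → Matrix (Fin q) (Fin r) ℝ) (e : ℕ → Fin r → ℝ)
    (hrec : ∀ k, e (k + 1) = e k - projP (M (k + 1)) *ᵥ e k)
    (τ : ℕ) (hge : nrm2 (e 0) ≤ nrm2 (e τ)) :
    ∀ k, 1 ≤ k → k ≤ τ → M k *ᵥ e 0 = 0 := by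
  have hstep : ∀ k, e (k + 1) ⬝ᵥ e (k + 1)
      = e k ⬝ᵥ e k - (projP (M (k + 1)) *ᵥ e k) ⬝ᵥ (projP (M (k + 1)) *ᵥ e k) := by
    intro k; rw [hrec k]; exact projP_step_dot _ _
  have hmono : ∀ j k, j ≤ k → e k ⬝ᵥ e k ≤ e j ⬝ᵥ e j := by
    intro j k hjk
    induction k, hjk using Nat.le_induction with
    | base => exact le_refl _
    | succ k hk ih =>
        calc e (k + 1) ⬝ᵥ e (k + 1) ≤ e k ⬝ᵥ e k := by
              rw [hstep k]; exact sub_le_self _ (dot_self_nonneg _)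
        _ ≤ _ := ih
  have h0τ : e 0 ⬝ᵥ e 0 ≤ e τ ⬝ᵥ e τ := dot_le_of_nrm2_le hge
  have hEq : ∀ k, k ≤ τ → e k ⬝ᵥ e k = e 0 ⬝ᵥ e 0 :=
    fun k hk => le_antisymm (hmono 0 k (Nat.zero_le k)) (le_trans h0τ (hmono k τ hk))
  have hzero : ∀ k, k < τ → projP (M (k + 1)) *ᵥ e k = 0 ∧ e (k + 1) = e k := by
    intro k hk
    have h1 := hEq k (le_of_lt hk)
    have h2 := hEq (k + 1) hk
    have h3 := hstep k
    have h4 : (projP (M (k + 1)) *ᵥ e k) ⬝ᵥ (projP (M (k + 1)) *ᵥ e k) = 0 := by linarith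
    have hw := dotProduct_self_eq_zero.mp h4
    exact ⟨hw, by rw [hrec k, hw, sub_zero]⟩
  have heq0 : ∀ k, k ≤ τ → e k = e 0 := by
    intro k
    induction k with
    | zero => intro _; rfl
    | succ k ih =>
        intro hk
        rw [(hzero k hk).2, ih (Nat.le_of_succ_le hk)]
  intro k hk1 hkτ
  obtain ⟨j, rfl⟩ : ∃ j, k = j + 1 := ⟨k - 1, by omega⟩
  have hz := (hzero j (by omega)).1
  rw [heq0 j (by omega)] at hz
  exact projP_mulVec_zero _ _ hz

end Aux

/-- On the event `{τ₁ < ∞}` (here: for any realization for which the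
first covering time `τ₁` is a finite number), there exists `γ₁ ∈ (0,1)` such that
`‖x_{τ₁} − x*‖_B ≤ γ₁ ‖x₀ − x*‖_B`. -/
theorem stmt3 {m n p : ℕ} (A : Matrix (Fin m) (Fin n) ℝ) (b : Fin m → ℝ)
    (hconsistent : ∃ y, A *ᵥ y = b)
    (B Bhalf : Matrix (Fin n) (Fin n) ℝ) (hB : B.PosDef)
    (hBsymm : Bhalfᵀ = Bhalf) (hBsq : Bhalf * Bhalf = B)
    (S : ℕ → Matrix (Fin m) (Fin p) ℝ)
    (x₀ : Fin n → ℝ) (x : ℕ → Fin n → ℝ)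
    (hx0 : x 0 = x₀) (hxrec : ∀ k, x (k + 1) = spStep A B b (S (k + 1)) (x k))
    (xstar : Fin n → ℝ) (hsol : A *ᵥ xstar = b)
    (hproj : ∀ y, A *ᵥ y = b →
      nrm2 (Bhalf *ᵥ (x₀ - xstar)) ≤ nrm2 (Bhalf *ᵥ (x₀ - y)))
    -- `Q k` has orthonormal columns forming a basis of `row(S_kᵀ A B^{-1/2})`
    (q : ℕ → ℕ) (Q : ∀ k, Matrix (Fin n) (Fin (q k)) ℝ)
    (hQorth : ∀ k, (Q k)ᵀ * Q k = 1)
    (hQspan : ∀ k, colSpace (Q k) = rowSpace ((S k)ᵀ * A * Bhalf⁻¹))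
    -- `τ₁` is finite: it is the smallest `k ≥ 1` with
    -- `col(Q₁) + ⋯ + col(Q_k) = row(AB^{-1/2})`
    (τ₁ : ℕ) (hτ₁pos : 1 ≤ τ₁)
    (hτ₁ : (⨆ i ∈ Finset.Icc 1 τ₁, colSpace (Q i)) = rowSpace (A * Bhalf⁻¹))
    (hτ₁min : ∀ k < τ₁, (⨆ i ∈ Finset.Icc 1 k, colSpace (Q i)) ≠ rowSpace (A * Bhalf⁻¹)) :
    ∃ γ₁ ∈ Set.Ioo (0 : ℝ) 1,
      nrm2 (Bhalf *ᵥ (x τ₁ - xstar)) ≤ γ₁ * nrm2 (Bhalf *ᵥ (x₀ - xstar)) := by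
  -- invertibility of `Bhalf`
  have hdetB : B.det ≠ 0 := ne_of_gt hB.det_pos
  have hdetBh : IsUnit Bhalf.det := by
    have hsq : Bhalf.det * Bhalf.det = B.det := by rw [← Matrix.det_mul, hBsq]
    refine isUnit_iff_ne_zero.mpr fun h => hdetB ?_
    rw [← hsq, h, mul_zero]
  have hBhBi : Bhalf * Bhalf⁻¹ = 1 := Matrix.mul_nonsing_inv _ hdetBh
  have hBiBh : Bhalf⁻¹ * Bhalf = 1 := Matrix.nonsing_inv_mul _ hdetBh
  have hBit : (Bhalf⁻¹)ᵀ = Bhalf⁻¹ := by rw [Matrix.transpose_nonsing_inv, hBsymm]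
  have hBinv : B⁻¹ = Bhalf⁻¹ * Bhalf⁻¹ := by rw [← hBsq, Matrix.mul_inv_rev]
  have hcancel1 : ∀ (c : ℕ) (X : Matrix (Fin n) (Fin c) ℝ), Bhalf * (Bhalf⁻¹ * X) = X := by
    intro c X; rw [← Matrix.mul_assoc, hBhBi, Matrix.one_mul]
  -- the recursion in `B^{1/2}` coordinates
  have hrec : ∀ k, Bhalf *ᵥ (x (k + 1) - xstar)
      = Bhalf *ᵥ (x k - xstar)
        - projP ((S (k + 1))ᵀ * A * Bhalf⁻¹) *ᵥ (Bhalf *ᵥ (x k - xstar)) := by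
    intro k
    have hres : A *ᵥ x k - b = A *ᵥ (x k - xstar) := by
      rw [Matrix.mulVec_sub, hsol]
    have harg : (S (k + 1))ᵀ * A * B⁻¹ * Aᵀ * S (k + 1)
        = ((S (k + 1))ᵀ * A * Bhalf⁻¹) * ((S (k + 1))ᵀ * A * Bhalf⁻¹)ᵀ := by
      rw [hBinv]
      simp only [Matrix.transpose_mul, Matrix.transpose_transpose, hBit, Matrix.mul_assoc]
    rw [hxrec k]
    unfold spStep
    rw [hres, sub_right_comm, Matrix.mulVec_sub]
    congr 1
    simp only [Matrix.mulVec_mulVec]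
    congr 1
    rw [harg]
    unfold projP
    rw [hBinv]
    simp only [Matrix.transpose_mul, Matrix.transpose_transpose, hBit, Matrix.mul_assoc,
      hBiBh, hBhBi, Matrix.mul_one, Matrix.one_mul, hcancel1]
  by_cases h0 : Bhalf *ᵥ (x₀ - xstar) = 0
  · -- trivial case: `x₀ = x*`
    have hx0s : x₀ = xstar := by
      have h1 : Bhalf⁻¹ *ᵥ (Bhalf *ᵥ (x₀ - xstar)) = 0 := by rw [h0, Matrix.mulVec_zero]
      rw [Matrix.mulVec_mulVec, hBiBh, Matrix.one_mulVec] at h1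
      exact sub_eq_zero.mp h1
    have hall : ∀ k, x k = xstar := by
      intro k
      induction k with
      | zero => rw [hx0, hx0s]
      | succ k ih =>
          rw [hxrec k, ih]
          unfold spStep
          rw [hsol, sub_self, Matrix.mulVec_zero, sub_zero]
    refine ⟨1 / 2, ⟨by norm_num, by norm_num⟩, ?_⟩
    rw [hall τ₁, sub_self, Matrix.mulVec_zero, nrm2_zero, h0, nrm2_zero]
    norm_num
  · have hR : 0 < nrm2 (Bhalf *ᵥ (x₀ - xstar)) := nrm2_pos h0
    have hL : nrm2 (Bhalf *ᵥ (x τ₁ - xstar)) < nrm2 (Bhalf *ᵥ (x₀ - xstar)) := by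
      by_contra hcon
      push_neg at hcon
      have hge : nrm2 (Bhalf *ᵥ (x 0 - xstar)) ≤ nrm2 (Bhalf *ᵥ (x τ₁ - xstar)) := by
        rw [hx0]; exact hcon
      have hMe : ∀ k, 1 ≤ k → k ≤ τ₁ →
          ((S k)ᵀ * A * Bhalf⁻¹) *ᵥ (Bhalf *ᵥ (x 0 - xstar)) = 0 :=
        core_contraction (fun k => (S k)ᵀ * A * Bhalf⁻¹)
          (fun k => Bhalf *ᵥ (x k - xstar)) hrec τ₁ hge
      set e0 : Fin n → ℝ := Bhalf *ᵥ (x 0 - xstar) with he0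
      let f : (Fin n → ℝ) →ₗ[ℝ] ℝ :=
        { toFun := fun w => w ⬝ᵥ e0
          map_add' := fun u v => add_dotProduct u v e0
          map_smul' := fun c v => smul_dotProduct c v e0 }
      have hle : rowSpace (A * Bhalf⁻¹) ≤ LinearMap.ker f := by
        rw [← hτ₁]
        refine iSup₂_le fun i hi => ?_
        rw [hQspan i]
        refine fun w hw => LinearMap.mem_ker.mpr ?_
        exact dot_eq_zero_of_mem_rowSpace
          (hMe i (Finset.mem_Icc.mp hi).1 (Finset.mem_Icc.mp hi).2) hw
      have hAe : (A * Bhalf⁻¹) *ᵥ e0 = 0 := by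
        funext j
        exact LinearMap.mem_ker.mp (hle (Submodule.subset_span (Set.mem_range_self j)))
      have hAxd : A *ᵥ (x 0 - xstar) = 0 := by
        have h1 : (A * Bhalf⁻¹ * Bhalf) *ᵥ (x 0 - xstar) = 0 := by
          rw [← Matrix.mulVec_mulVec]; exact hAe
        rwa [Matrix.mul_assoc, hBiBh, Matrix.mul_one] at h1
      have hAx0 : A *ᵥ x₀ = b := by
        rw [Matrix.mulVec_sub, sub_eq_zero, hsol, hx0] at hAxd
        exact hAxd
      have hfin := hproj x₀ hAx0
      rw [sub_self, Matrix.mulVec_zero, nrm2_zero] at hfin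
      linarith
    set R := nrm2 (Bhalf *ᵥ (x₀ - xstar)) with hRdef
    set L := nrm2 (Bhalf *ᵥ (x τ₁ - xstar)) with hLdef
    have hLnn : 0 ≤ L := nrm2_nonneg _
    refine ⟨(L / R + 1) / 2, ⟨?_, ?_⟩, ?_⟩
    · have : 0 ≤ L / R := div_nonneg hLnn (le_of_lt hR)
      linarith
    · have : L / R < 1 := (div_lt_one hR).mpr hL
      linarith
    · have hγ : (L / R + 1) / 2 * R = (L + R) / 2 := by
        field_simp
      rw [hγ]
      linarith


end
end

section
/- Let {S_k : k ∈ ℕ} be independent and identically distributed random m×p matrices. Then, whenever they exist, the increments {τ_ℓ − τ_{ℓ−1} : ℓ ∈ ℕ} are independent and identically distributed; moreover, for any fixed measurable function g of the blocks, the random variables γ_ℓ := g(Q_{τ_{ℓ−1}+1},…,Q_{τ_ℓ}) are independent and identically distributed across ℓ. -/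
open MeasureTheory ProbabilityTheory Matrix Finset Filter

noncomputable section

namespace Stmt5Aux


variable {n : ℕ}


variable {n : ℕ}

lemma span_iff_rat {ι : Type*} [Fintype ι] (N : ι → (Fin n → ℝ)) (v : Fin n → ℝ) :
    v ∈ Submodule.span ℝ (Set.range N) ↔
      ∀ ε : ℝ, 0 < ε → ∃ c : ι → ℚ, ‖(∑ i, (c i : ℝ) • N i) - v‖ < ε := by
  constructor
  · intro hv ε hε
    obtain ⟨c, hc⟩ := (Submodule.mem_span_range_iff_exists_fun ℝ).mp hv
    set R : ℝ := (∑ i, ‖N i‖) + 1 with hR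
    have hR0 : 0 < R := by positivity
    have hδ : 0 < ε / R := by positivity
    choose c' hc' using fun i => exists_rat_near (c i) hδ
    refine ⟨c', ?_⟩
    have h1 : (∑ i, (c' i : ℝ) • N i) - v = ∑ i, ((c' i : ℝ) - c i) • N i := by
      rw [← hc, ← Finset.sum_sub_distrib]
      congr 1; ext i; rw [sub_smul]
    rw [h1]
    calc ‖∑ i, ((c' i : ℝ) - c i) • N i‖ ≤ ∑ i, ‖((c' i : ℝ) - c i) • N i‖ :=
          norm_sum_le _ _
      _ = ∑ i, |(c' i : ℝ) - c i| * ‖N i‖ := by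
          simp [norm_smul, Real.norm_eq_abs]
      _ ≤ ∑ i, (ε / R) * ‖N i‖ := by
          refine Finset.sum_le_sum fun i _ => ?_
          have := (hc' i).le
          have habs : |(c' i : ℝ) - c i| ≤ ε / R := by
            rw [abs_sub_comm]; exact this
          exact mul_le_mul_of_nonneg_right habs (norm_nonneg _)
      _ = (ε / R) * ∑ i, ‖N i‖ := by rw [Finset.mul_sum]
      _ < ε := by
          rw [div_mul_eq_mul_div, div_lt_iff₀ hR0]
          have h2 : (∑ i, ‖N i‖) < R := by rw [hR]; linarith
          have h3 : 0 ≤ ∑ i, ‖N i‖ := Finset.sum_nonneg fun i _ => norm_nonneg _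
          nlinarith
  · intro h
    have hcl : IsClosed ((Submodule.span ℝ (Set.range N) : Submodule ℝ (Fin n → ℝ)) : Set (Fin n → ℝ)) :=
      Submodule.closed_of_finiteDimensional _
    have : v ∈ closure ((Submodule.span ℝ (Set.range N) : Submodule ℝ (Fin n → ℝ)) : Set (Fin n → ℝ)) := by
      rw [Metric.mem_closure_iff]
      intro ε hε
      obtain ⟨c, hc⟩ := h ε hε
      refine ⟨∑ i, (c i : ℝ) • N i, ?_, ?_⟩
      · exact Submodule.sum_mem _ fun i _ =>
          Submodule.smul_mem _ _ (Submodule.subset_span ⟨i, rfl⟩)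
      · rw [dist_comm, dist_eq_norm]; exact hc
    rwa [hcl.closure_eq] at this

lemma measurableSet_span_mem {ι : Type*} [Fintype ι] (v : Fin n → ℝ) :
    MeasurableSet {N : ι → Fin n → ℝ | v ∈ Submodule.span ℝ (Set.range N)} := by
  have heq : {N : ι → Fin n → ℝ | v ∈ Submodule.span ℝ (Set.range N)} =
      ⋂ k : ℕ, ⋃ c : ι → ℚ,
        {N : ι → Fin n → ℝ | ‖(∑ i, (c i : ℝ) • N i) - v‖ < 1 / (k + 1)} := by
    ext N
    simp only [Set.mem_setOf_eq, Set.mem_iInter, Set.mem_iUnion]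
    rw [span_iff_rat]
    constructor
    · intro h k; exact h _ (by positivity)
    · intro h ε hε
      obtain ⟨k, hk⟩ := exists_nat_one_div_lt hε
      obtain ⟨c, hc⟩ := h k
      exact ⟨c, hc.trans hk⟩
  rw [heq]
  refine MeasurableSet.iInter fun k => MeasurableSet.iUnion fun c => ?_
  have hm : Measurable fun N : ι → Fin n → ℝ => ‖(∑ i, (c i : ℝ) • N i) - v‖ := by
    apply Measurable.norm
    apply Measurable.sub _ measurable_const
    exact Finset.measurable_sum _ fun i _ => by fun_prop
  exact hm (measurableSet_Iio (a := 1 / ((k : ℝ) + 1)))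



variable {m p : ℕ} (A : Matrix (Fin m) (Fin n) ℝ) (Bh : Matrix (Fin n) (Fin n) ℝ)

lemma rowSpace_mul_le {a b c : ℕ} (X : Matrix (Fin a) (Fin b) ℝ) (Y : Matrix (Fin b) (Fin c) ℝ) :
    rowSpace (X * Y) ≤ rowSpace Y := by
  rw [rowSpace, Submodule.span_le]
  rintro _ ⟨r, rfl⟩
  have h : (X * Y) r = ∑ s, X r s • Y s := by
    ext j
    simp [Matrix.mul_apply, Finset.sum_apply]
  rw [h]
  exact Submodule.sum_mem _ fun s _ => Submodule.smul_mem _ _ (Submodule.subset_span ⟨s, rfl⟩)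

def stackF (k : ℕ) (h : ℕ → Matrix (Fin m) (Fin p) ℝ) : Fin k × Fin p → Fin n → ℝ :=
  fun ir => ((h (ir.1 : ℕ))ᵀ * A * Bh⁻¹) ir.2

lemma span_stack (k : ℕ) (h : ℕ → Matrix (Fin m) (Fin p) ℝ) :
    Submodule.span ℝ (Set.range (stackF A Bh k h)) =
      ⨆ i ∈ Finset.range k, rowSpace ((h i)ᵀ * A * Bh⁻¹) := by
  have h1 : Set.range (stackF A Bh k h) =
      ⋃ i : Fin k, Set.range (((h (i : ℕ))ᵀ * A * Bh⁻¹ : Matrix (Fin p) (Fin n) ℝ)) := by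
    ext v
    constructor
    · rintro ⟨⟨i, r⟩, rfl⟩
      exact Set.mem_iUnion.mpr ⟨i, ⟨r, rfl⟩⟩
    · intro hv
      obtain ⟨i, r, rfl⟩ := Set.mem_iUnion.mp hv
      exact ⟨(i, r), rfl⟩
  rw [h1, Submodule.span_iUnion]
  apply le_antisymm
  · exact iSup_le fun i => le_iSup₂ (f := fun (i : ℕ) (_ : i ∈ Finset.range k) =>
      rowSpace ((h i)ᵀ * A * Bh⁻¹)) (i : ℕ) (Finset.mem_range.mpr i.2)
  · exact iSup₂_le fun i hi =>
      le_iSup (fun j : Fin k => Submodule.span ℝ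
        (Set.range (((h (j : ℕ))ᵀ * A * Bh⁻¹ : Matrix (Fin p) (Fin n) ℝ)))) ⟨i, Finset.mem_range.mp hi⟩

def goodSet (k : ℕ) : Set (ℕ → Matrix (Fin m) (Fin p) ℝ) :=
  {h | (⨆ i ∈ Finset.range k, rowSpace ((h i)ᵀ * A * Bh⁻¹)) = rowSpace (A * Bh⁻¹)}

lemma goodSet_iff (k : ℕ) (h : ℕ → Matrix (Fin m) (Fin p) ℝ) :
    h ∈ goodSet A Bh k ↔
      ∀ j, (A * Bh⁻¹) j ∈ Submodule.span ℝ (Set.range (stackF A Bh k h)) := by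
  rw [goodSet, Set.mem_setOf_eq, span_stack]
  constructor
  · intro he j
    rw [he]
    exact Submodule.subset_span ⟨j, rfl⟩
  · intro hj
    apply le_antisymm
    · refine iSup₂_le fun i _ => ?_
      rw [Matrix.mul_assoc]
      exact rowSpace_mul_le _ _
    · rw [rowSpace, Submodule.span_le]
      rintro _ ⟨j, rfl⟩
      exact hj j

lemma measurable_stackF (k : ℕ) :
    Measurable (stackF A Bh k (m := m) (p := p)) := by
  refine measurable_pi_lambda _ fun ir => measurable_pi_lambda _ fun j => ?_
  have heq : (fun h : ℕ → Matrix (Fin m) (Fin p) ℝ => stackF A Bh k h ir j) =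
      fun h => ∑ t, (∑ s, h (ir.1 : ℕ) s (ir.2) * A s t) * Bh⁻¹ t j := by
    ext h
    simp [stackF, Matrix.mul_apply, Matrix.transpose_apply]
  rw [heq]
  refine Finset.measurable_sum _ fun t _ => Measurable.mul ?_ measurable_const
  refine Finset.measurable_sum _ fun s _ => Measurable.mul ?_ measurable_const
  exact (measurable_pi_apply _).comp ((measurable_pi_apply _).comp (measurable_pi_apply _))

lemma measurableSet_goodSet (k : ℕ) : MeasurableSet (goodSet A Bh (m := m) (p := p) k) := by
  have heq : goodSet A Bh (m := m) (p := p) k =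
      ⋂ j, stackF A Bh k ⁻¹' {N | (A * Bh⁻¹) j ∈ Submodule.span ℝ (Set.range N)} := by
    ext h
    simp only [Set.mem_iInter, Set.mem_preimage, Set.mem_setOf_eq]
    exact goodSet_iff A Bh k h
  rw [heq]
  exact MeasurableSet.iInter fun j =>
    measurable_stackF A Bh k (measurableSet_span_mem _)

lemma goodSet_local (k : ℕ) (h h' : ℕ → Matrix (Fin m) (Fin p) ℝ)
    (hag : ∀ i, i < k → h i = h' i) :
    h ∈ goodSet A Bh k ↔ h' ∈ goodSet A Bh k := by
  have : (⨆ i ∈ Finset.range k, rowSpace ((h i)ᵀ * A * Bh⁻¹)) =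
      ⨆ i ∈ Finset.range k, rowSpace ((h' i)ᵀ * A * Bh⁻¹) := by
    refine biSup_congr fun i hi => ?_
    rw [hag i (Finset.mem_range.mp hi)]
  simp only [goodSet, Set.mem_setOf_eq, this]

variable (g : ℕ∞ × (ℕ → Matrix (Fin m) (Fin p) ℝ) → ℝ)

def dF (h : ℕ → Matrix (Fin m) (Fin p) ℝ) : ℕ∞ :=
  sInf {e : ℕ∞ | 0 < e ∧ ∃ k : ℕ, e = (k : ℕ∞) ∧ h ∈ goodSet A Bh k}

lemma one_le_dF (h : ℕ → Matrix (Fin m) (Fin p) ℝ) : 1 ≤ dF A Bh h := by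
  refine le_sInf fun e he => ?_
  obtain ⟨he0, k, rfl, -⟩ := he
  have hk : k ≠ 0 := by exact_mod_cast he0.ne'
  exact_mod_cast Nat.one_le_iff_ne_zero.mpr hk

lemma dF_eq_top_iff (h : ℕ → Matrix (Fin m) (Fin p) ℝ) :
    dF A Bh h = ⊤ ↔ ∀ k : ℕ, 0 < k → h ∉ goodSet A Bh k := by
  rw [dF, sInf_eq_top]
  constructor
  · intro H k hk hg
    have := H (k : ℕ∞) ⟨by exact_mod_cast hk, k, rfl, hg⟩
    simp at this
  · rintro H e ⟨he0, k, rfl, hg⟩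
    exact absurd hg (H k (by exact_mod_cast he0))

lemma dF_eq_coe_iff (h : ℕ → Matrix (Fin m) (Fin p) ℝ) (δ : ℕ) (hδ : 0 < δ) :
    dF A Bh h = (δ : ℕ∞) ↔
      (h ∈ goodSet A Bh δ ∧ ∀ k, 0 < k → k < δ → h ∉ goodSet A Bh k) := by
  constructor
  · intro hd
    have hne : {e : ℕ∞ | 0 < e ∧ ∃ k : ℕ, e = (k : ℕ∞) ∧ h ∈ goodSet A Bh k}.Nonempty := by
      by_contra hne
      rw [Set.not_nonempty_iff_eq_empty] at hne
      rw [dF, hne, sInf_empty] at hd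
      simp at hd
    have hmem := csInf_mem hne
    rw [show sInf {e : ℕ∞ | 0 < e ∧ ∃ k : ℕ, e = (k : ℕ∞) ∧ h ∈ goodSet A Bh k} =
      dF A Bh h from rfl, hd] at hmem
    obtain ⟨-, k, hk, hg⟩ := hmem
    have hkδ : δ = k := by exact_mod_cast hk
    subst hkδ
    refine ⟨hg, fun k hk0 hkδ hgk => ?_⟩
    have hle : dF A Bh h ≤ (k : ℕ∞) := sInf_le ⟨by exact_mod_cast hk0, k, rfl, hgk⟩
    rw [hd] at hle
    have : δ ≤ k := by exact_mod_cast hle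
    omega
  · rintro ⟨hgδ, hmin⟩
    apply le_antisymm
    · exact sInf_le ⟨by exact_mod_cast hδ, δ, rfl, hgδ⟩
    · refine le_sInf fun e he => ?_
      obtain ⟨he0, k, rfl, hg⟩ := he
      by_contra hlt
      push_neg at hlt
      have hk : k < δ := by exact_mod_cast hlt
      exact hmin k (by exact_mod_cast he0) hk hg

lemma dF_local (h h' : ℕ → Matrix (Fin m) (Fin p) ℝ) (δ : ℕ)
    (hag : ∀ i, i < δ → h i = h' i) (hd : dF A Bh h = (δ : ℕ∞)) :
    dF A Bh h' = (δ : ℕ∞) := by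
  have hδ : 0 < δ := by
    rcases Nat.eq_zero_or_pos δ with h0 | h0
    · subst h0
      have := one_le_dF A Bh h
      rw [hd] at this
      simp at this
    · exact h0
  rw [dF_eq_coe_iff _ _ _ _ hδ] at hd ⊢
  obtain ⟨hg, hmin⟩ := hd
  refine ⟨(goodSet_local A Bh δ h h' hag).mp hg, fun k hk0 hkδ hg' => ?_⟩
  exact hmin k hk0 hkδ ((goodSet_local A Bh k h h' fun i hi => hag i (hi.trans hkδ)).mpr hg')

lemma measurable_dF : Measurable (dF A Bh (m := m) (p := p)) := by
  apply measurable_to_countable'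
  intro e
  cases e with
  | top =>
    have heq : dF A Bh (m := m) (p := p) ⁻¹' {⊤} = ⋂ k : ℕ, (goodSet A Bh (k + 1))ᶜ := by
      ext h
      simp only [Set.mem_preimage, Set.mem_singleton_iff, Set.mem_iInter, Set.mem_compl_iff,
        dF_eq_top_iff]
      constructor
      · intro H k
        exact H (k + 1) k.succ_pos
      · intro H k hk
        obtain ⟨k', rfl⟩ := Nat.exists_eq_succ_of_ne_zero hk.ne'
        exact H k'
    rw [heq]
    exact MeasurableSet.iInter fun k => (measurableSet_goodSet A Bh (k + 1)).compl
  | coe δ =>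
    rcases Nat.eq_zero_or_pos δ with h0 | h0
    · subst h0
      have heq : dF A Bh (m := m) (p := p) ⁻¹' {((0:ℕ) : ℕ∞)} = ∅ := by
        ext h
        simp only [Set.mem_preimage, Set.mem_singleton_iff, Set.mem_empty_iff_false,
          iff_false]
        intro hd
        have := one_le_dF A Bh h
        rw [hd] at this
        simp at this
      rw [heq]
      exact MeasurableSet.empty
    · have heq : dF A Bh (m := m) (p := p) ⁻¹' {(δ : ℕ∞)} =
          goodSet A Bh δ ∩ ⋂ (k : ℕ), ⋂ (_ : 0 < k ∧ k < δ), (goodSet A Bh k)ᶜ := by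
        ext h
        simp only [Set.mem_preimage, Set.mem_singleton_iff, Set.mem_inter_iff, Set.mem_iInter,
          Set.mem_compl_iff, dF_eq_coe_iff A Bh h δ h0]
        constructor
        · rintro ⟨hg, hmin⟩
          exact ⟨hg, fun k hk => hmin k hk.1 hk.2⟩
        · rintro ⟨hg, hmin⟩
          exact ⟨hg, fun k hk0 hkδ => hmin k ⟨hk0, hkδ⟩⟩
      rw [heq]
      exact (measurableSet_goodSet A Bh δ).inter
        (MeasurableSet.iInter fun k => MeasurableSet.iInter fun _ =>
          (measurableSet_goodSet A Bh k).compl)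

def Phi (h : ℕ → Matrix (Fin m) (Fin p) ℝ) : ℕ∞ × ℝ :=
  (dF A Bh h, g (dF A Bh h, h))

lemma measurable_Phi (hg : Measurable g) : Measurable (Phi A Bh g) :=
  Measurable.prodMk (measurable_dF A Bh)
    (hg.comp ((measurable_dF A Bh).prodMk measurable_id))

def blockSet (δ : ℕ) (E : Set (ℕ∞ × ℝ)) : Set (ℕ → Matrix (Fin m) (Fin p) ℝ) :=
  {h | dF A Bh h = (δ : ℕ∞) ∧ Phi A Bh g h ∈ E}

lemma measurableSet_blockSet (hg : Measurable g) (δ : ℕ) (E : Set (ℕ∞ × ℝ))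
    (hE : MeasurableSet E) : MeasurableSet (blockSet A Bh g δ E) := by
  have heq : blockSet A Bh g δ E =
      dF A Bh ⁻¹' {(δ : ℕ∞)} ∩ Phi A Bh g ⁻¹' E := rfl
  rw [heq]
  exact ((measurable_dF A Bh) (measurableSet_singleton _)).inter ((measurable_Phi A Bh g hg) hE)

def extendFn (δ : ℕ) (u : Fin δ → Matrix (Fin m) (Fin p) ℝ) : ℕ → Matrix (Fin m) (Fin p) ℝ :=
  fun j => if hj : j < δ then u ⟨j, hj⟩ else 0

lemma measurable_extendFn (δ : ℕ) : Measurable (extendFn (m := m) (p := p) δ) := by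
  refine measurable_pi_lambda _ fun j => ?_
  by_cases hj : j < δ
  · simp only [extendFn, hj, dif_pos]
    exact measurable_pi_apply _
  · simp only [extendFn, hj, dif_neg, not_false_iff]
    exact measurable_const

lemma blockSet_local
    (hgblock : ∀ (d : ℕ∞) (f f' : ℕ → Matrix (Fin m) (Fin p) ℝ),
      (∀ j : ℕ, (j : ℕ∞) < d → f j = f' j) → g (d, f) = g (d, f'))
    (δ : ℕ) (E : Set (ℕ∞ × ℝ)) (h h' : ℕ → Matrix (Fin m) (Fin p) ℝ)
    (hag : ∀ i, i < δ → h i = h' i) (hh : h ∈ blockSet A Bh g δ E) :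
    h' ∈ blockSet A Bh g δ E := by
  obtain ⟨hd, hPhi⟩ := hh
  have hd' : dF A Bh h' = (δ : ℕ∞) := dF_local A Bh h h' δ hag hd
  refine ⟨hd', ?_⟩
  have hgg : g ((δ : ℕ∞), h) = g ((δ : ℕ∞), h') :=
    hgblock (δ : ℕ∞) h h' fun j hj => hag j (by exact_mod_cast hj)
  have : Phi A Bh g h' = Phi A Bh g h := by
    rw [Phi, Phi, hd, hd', hgg]
  rwa [this]

lemma blockSet_cylinder (hg : Measurable g)
    (hgblock : ∀ (d : ℕ∞) (f f' : ℕ → Matrix (Fin m) (Fin p) ℝ),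
      (∀ j : ℕ, (j : ℕ∞) < d → f j = f' j) → g (d, f) = g (d, f'))
    (δ : ℕ) (E : Set (ℕ∞ × ℝ)) (hE : MeasurableSet E) :
    ∃ D : Set (Fin δ → Matrix (Fin m) (Fin p) ℝ), MeasurableSet D ∧
      blockSet A Bh g δ E =
        (fun (h : ℕ → Matrix (Fin m) (Fin p) ℝ) (i : Fin δ) => h (i : ℕ)) ⁻¹' D := by
  refine ⟨extendFn δ ⁻¹' blockSet A Bh g δ E,
    (measurable_extendFn δ) (measurableSet_blockSet A Bh g hg δ E hE), ?_⟩
  ext h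
  simp only [Set.mem_preimage]
  have hag : ∀ i, i < δ → h i = extendFn δ (fun i : Fin δ => h (i : ℕ)) i := by
    intro i hi
    simp [extendFn, hi]
  constructor
  · exact blockSet_local A Bh g hgblock δ E h _ hag
  · exact blockSet_local A Bh g hgblock δ E _ h fun i hi => (hag i hi).symm



variable {m p : ℕ} {Ω : Type*} [MeasurableSpace Ω]
variable (S : ℕ → Ω → Matrix (Fin m) (Fin p) ℝ)

def Wt (t : ℕ) : Ω → ℕ → Matrix (Fin m) (Fin p) ℝ := fun a j => S (t + 1 + j) a

def Vt (t : ℕ) : Ω → Fin t → Matrix (Fin m) (Fin p) ℝ := fun a i => S (1 + (i : ℕ)) a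

def sigT (t : ℕ) : MeasurableSpace Ω := MeasurableSpace.comap (Vt S t) inferInstance

lemma measurable_Wt (hSmeas : ∀ k, Measurable (S k)) (t : ℕ) : Measurable (Wt S t) :=
  measurable_pi_lambda _ fun _ => hSmeas _

lemma measurable_Vt (hSmeas : ∀ k, Measurable (S k)) (t : ℕ) : Measurable (Vt S t) :=
  measurable_pi_lambda _ fun _ => hSmeas _

lemma sigT_le (hSmeas : ∀ k, Measurable (S k)) (t : ℕ) : sigT S t ≤ ‹MeasurableSpace Ω› :=
  (measurable_Vt S hSmeas t).comap_le

omit [MeasurableSpace Ω] in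
lemma sigT_mono {t t' : ℕ} (h : t ≤ t') : sigT S t ≤ sigT S t' := by
  have heq : Vt S t = (fun (u : Fin t' → Matrix (Fin m) (Fin p) ℝ) (i : Fin t) =>
      u (Fin.castLE h i)) ∘ Vt S t' := by
    funext a i
    simp [Vt]
  rw [sigT, heq, ← MeasurableSpace.comap_comp]
  exact MeasurableSpace.comap_mono
    (measurable_pi_lambda _ fun i => measurable_pi_apply _).comap_le

omit [MeasurableSpace Ω] in
lemma mem_sigT_of_cylinder (t δ : ℕ) (D : Set (Fin δ → Matrix (Fin m) (Fin p) ℝ))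
    (hD : MeasurableSet D) :
    MeasurableSet[sigT S (t + δ)]
      (Wt S t ⁻¹' ((fun (h : ℕ → Matrix (Fin m) (Fin p) ℝ) (i : Fin δ) => h (i : ℕ)) ⁻¹' D)) := by
  have heq : (fun (h : ℕ → Matrix (Fin m) (Fin p) ℝ) (i : Fin δ) => h (i : ℕ)) ∘ Wt S t =
      (fun (u : Fin (t + δ) → Matrix (Fin m) (Fin p) ℝ) (i : Fin δ) =>
        u ⟨t + (i : ℕ), by omega⟩) ∘ Vt S (t + δ) := by
    funext a i
    show S (t + 1 + (i : ℕ)) a = S (1 + (t + (i : ℕ))) a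
    have harith : t + 1 + (i : ℕ) = 1 + (t + (i : ℕ)) := by omega
    rw [harith]
  have h2 : Wt S t ⁻¹' ((fun (h : ℕ → Matrix (Fin m) (Fin p) ℝ) (i : Fin δ) => h (i : ℕ)) ⁻¹' D) =
      Vt S (t + δ) ⁻¹' ((fun (u : Fin (t + δ) → Matrix (Fin m) (Fin p) ℝ) (i : Fin δ) =>
        u ⟨t + (i : ℕ), by omega⟩) ⁻¹' D) := by
    rw [← Set.preimage_comp, ← Set.preimage_comp, heq]
  rw [h2]
  exact ⟨_, (measurable_pi_lambda _ fun i => measurable_pi_apply _) hD, rfl⟩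

variable (μ : Measure Ω) [IsProbabilityMeasure μ]

lemma indepFun_Vt_restr (hSmeas : ∀ k, Measurable (S k))
    (hSindep : iIndepFun (m := fun _ => matrixMeasurableSpace) S μ)
    (t : ℕ) (sF : Finset ℕ) :
    IndepFun (Vt S t) (fun a (i : sF) => S (t + 1 + (i : ℕ)) a) μ := by
  classical
  have base := hSindep.indepFun_finset ((Finset.range t).image (fun i => 1 + i))
    (sF.image (fun i => t + 1 + i)) (by
      rw [Finset.disjoint_left]
      intro x hx hx'
      simp only [Finset.mem_image, Finset.mem_range] at hx hx'
      omega) hSmeas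
  have hφ : Measurable (fun (u : (i : ((Finset.range t).image (fun i => 1 + i))) →
      Matrix (Fin m) (Fin p) ℝ) (i : Fin t) =>
      u ⟨1 + (i : ℕ), Finset.mem_image_of_mem _ (Finset.mem_range.mpr i.2)⟩) :=
    measurable_pi_lambda _ fun i => measurable_pi_apply _
  have hψ : Measurable (fun (u : (i : (sF.image (fun i => t + 1 + i))) →
      Matrix (Fin m) (Fin p) ℝ) (i : sF) =>
      u ⟨t + 1 + (i : ℕ), Finset.mem_image_of_mem _ i.2⟩) :=
    measurable_pi_lambda _ fun i => measurable_pi_apply _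
  exact base.comp hφ hψ

lemma indep_sigT_Wt (hSmeas : ∀ k, Measurable (S k))
    (hSindep : iIndepFun (m := fun _ => matrixMeasurableSpace) S μ) (t : ℕ) :
    Indep (sigT S t) (MeasurableSpace.comap (Wt S t) MeasurableSpace.pi) μ := by
  refine IndepSets.indep (m1 := sigT S t)
    (m2 := MeasurableSpace.comap (Wt S t) MeasurableSpace.pi)
    (sigT_le S hSmeas t) ((measurable_Wt S hSmeas t).comap_le)
    (@MeasurableSpace.isPiSystem_measurableSet Ω (sigT S t))
    ((isPiSystem_squareCylinders (fun _ : ℕ =>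
        @MeasurableSpace.isPiSystem_measurableSet (Matrix (Fin m) (Fin p) ℝ) _)
      (fun _ => by simp only [Set.mem_setOf_eq]; exact MeasurableSet.univ)).comap (Wt S t))
    (@MeasurableSpace.generateFrom_measurableSet Ω (sigT S t)).symm
    ?_ ?_
  · rw [← generateFrom_squareCylinders, MeasurableSpace.comap_generateFrom]
    rfl
  · rw [IndepSets_iff]
    rintro s1 s2 hs1 ⟨s2', ⟨sF, tF, htF, rfl⟩, rfl⟩
    obtain ⟨B, hB, rfl⟩ := hs1
    have hpre : Wt S t ⁻¹' ((sF : Set ℕ).pi tF) =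
        (fun a (i : sF) => S (t + 1 + (i : ℕ)) a) ⁻¹' (Set.univ.pi fun i : sF => tF i) := by
      ext a
      simp only [Set.mem_preimage, Set.mem_pi, Set.mem_univ, forall_true_left, Wt]
      constructor
      · intro h i
        exact h i i.2
      · intro h i hi
        exact h ⟨i, hi⟩
    have hind := indepFun_Vt_restr S μ hSmeas hSindep t sF
    have hCmeas : MeasurableSet (Set.univ.pi fun i : sF => tF i) :=
      MeasurableSet.univ_pi fun i => htF (i : ℕ) (Set.mem_univ _)
    rw [hpre]
    exact hind.measure_inter_preimage_eq_mul _ _ hB hCmeas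

lemma map_Wt_eq (hSmeas : ∀ k, Measurable (S k))
    (hSindep : iIndepFun (m := fun _ => matrixMeasurableSpace) S μ)
    (hSident : ∀ k, IdentDistrib (S k) (S 1) μ μ) (t : ℕ) :
    μ.map (Wt S t) = μ.map (Wt S 0) := by
  have hprod : ∀ (t : ℕ) (sF : Finset ℕ) (tF : ℕ → Set (Matrix (Fin m) (Fin p) ℝ)),
      (∀ i, MeasurableSet (tF i)) →
      μ (⋂ i ∈ sF, (fun a => S (t + 1 + i) a) ⁻¹' tF i) = ∏ i ∈ sF, μ (S 1 ⁻¹' tF i) := by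
    intro t sF tF htF
    classical
    have h1 : (⋂ i ∈ sF, (fun a => S (t + 1 + i) a) ⁻¹' tF i) =
        ⋂ k ∈ sF.image (fun i => t + 1 + i), S k ⁻¹' tF (k - (t + 1)) := by
      ext a
      simp only [Set.mem_iInter, Set.mem_preimage, Finset.mem_image]
      constructor
      · rintro h k ⟨i, hi, rfl⟩
        simpa [Nat.add_sub_cancel_left] using h i hi
      · intro h i hi
        have := h (t + 1 + i) ⟨i, hi, rfl⟩
        simpa [Nat.add_sub_cancel_left] using this
    have h2 := hSindep.measure_inter_preimage_eq_mul
      (S := sF.image (fun i => t + 1 + i))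
      (sets := fun k => tF (k - (t + 1))) (fun i _ => htF _)
    rw [h1, h2, Finset.prod_image (fun a _ b _ hab => by omega)]
    refine Finset.prod_congr rfl fun i _ => ?_
    simp only [Nat.add_sub_cancel_left]
    exact (hSident (t + 1 + i)).measure_mem_eq (htF i)
  have hWm : ∀ t, Measurable (Wt S t) := measurable_Wt S hSmeas
  haveI h1 : IsProbabilityMeasure (μ.map (Wt S t)) :=
    Measure.isProbabilityMeasure_map (hWm t).aemeasurable
  haveI h2 : IsProbabilityMeasure (μ.map (Wt S 0)) :=
    Measure.isProbabilityMeasure_map (hWm 0).aemeasurable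
  refine ext_of_generate_finite
    (squareCylinders fun _ : ℕ => {s : Set (Matrix (Fin m) (Fin p) ℝ) | MeasurableSet s})
    generateFrom_squareCylinders.symm
    (isPiSystem_squareCylinders (fun _ =>
        @MeasurableSpace.isPiSystem_measurableSet (Matrix (Fin m) (Fin p) ℝ) _)
      (fun _ => by simp only [Set.mem_setOf_eq]; exact MeasurableSet.univ)) ?_ (by simp)
  rintro s ⟨sF, tF, htF, rfl⟩
  have htFm : ∀ i, MeasurableSet (tF i) := fun i => htF i (Set.mem_univ _)
  have hsm : MeasurableSet ((sF : Set ℕ).pi tF) :=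
    MeasurableSet.pi (Finset.countable_toSet _) fun i _ => htFm i
  rw [Measure.map_apply (hWm t) hsm, Measure.map_apply (hWm 0) hsm]
  have hpre : ∀ t', Wt S t' ⁻¹' ((sF : Set ℕ).pi tF) =
      ⋂ i ∈ sF, (fun a => S (t' + 1 + i) a) ⁻¹' tF i := by
    intro t'
    ext a
    simp [Wt, Set.mem_pi]
  rw [hpre t, hpre 0, hprod t sF tF htFm, hprod 0 sF tF htFm]

lemma measure_Wt_preimage (hSmeas : ∀ k, Measurable (S k))
    (hSindep : iIndepFun (m := fun _ => matrixMeasurableSpace) S μ)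
    (hSident : ∀ k, IdentDistrib (S k) (S 1) μ μ) (t : ℕ)
    (C : Set (ℕ → Matrix (Fin m) (Fin p) ℝ)) (hC : MeasurableSet C) :
    μ (Wt S t ⁻¹' C) = μ (Wt S 0 ⁻¹' C) := by
  rw [← Measure.map_apply (measurable_Wt S hSmeas t) hC,
    ← Measure.map_apply (measurable_Wt S hSmeas 0) hC,
    map_Wt_eq S μ hSmeas hSindep hSident t]


lemma enat_add_sub_cancel (t : ℕ) (d : ℕ∞) : ((t : ℕ∞) + d) - t = d := by
  cases d with
  | top => simp
  | coe d => rw [← Nat.cast_add, ← ENat.coe_sub]; norm_cast; omega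

lemma iSup_Icc_reindex {α : Type*} [CompleteLattice α] (F : ℕ → α) (t k : ℕ) :
    (⨆ i ∈ Finset.Icc (t + 1) (t + k), F i) = ⨆ j ∈ Finset.range k, F (t + 1 + j) := by
  apply le_antisymm
  · refine iSup₂_le fun i hi => ?_
    rw [Finset.mem_Icc] at hi
    obtain ⟨j, hj, rfl⟩ : ∃ j, j < k ∧ i = t + 1 + j := ⟨i - (t + 1), by omega, by omega⟩
    exact le_iSup₂ (f := fun j (_ : j ∈ Finset.range k) => F (t + 1 + j)) j
      (Finset.mem_range.mpr hj)
  · refine iSup₂_le fun j hj => ?_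
    rw [Finset.mem_range] at hj
    exact le_iSup₂ (f := fun i (_ : i ∈ Finset.Icc (t + 1) (t + k)) => F i) (t + 1 + j)
      (Finset.mem_Icc.mpr ⟨by omega, by omega⟩)

lemma sInf_translate (t : ℕ) (Q : ℕ → Prop) :
    sInf {e : ℕ∞ | (t : ℕ∞) < e ∧ ∃ k : ℕ, e = (k : ℕ∞) ∧ Q k} =
      (t : ℕ∞) + sInf {e : ℕ∞ | 0 < e ∧ ∃ k : ℕ, e = (k : ℕ∞) ∧ Q (t + k)} := by
  set Sr := {e : ℕ∞ | 0 < e ∧ ∃ k : ℕ, e = (k : ℕ∞) ∧ Q (t + k)} with hSr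
  have himg : {e : ℕ∞ | (t : ℕ∞) < e ∧ ∃ k : ℕ, e = (k : ℕ∞) ∧ Q k} =
      (fun e => (t : ℕ∞) + e) '' Sr := by
    ext e
    constructor
    · rintro ⟨hlt, k, rfl, hQ⟩
      have htk : t < k := by exact_mod_cast hlt
      refine ⟨((k - t : ℕ) : ℕ∞),
        ⟨by exact_mod_cast Nat.sub_pos_of_lt htk, k - t, rfl, by
          rwa [Nat.add_sub_cancel' htk.le]⟩, ?_⟩
      show (t : ℕ∞) + ((k - t : ℕ) : ℕ∞) = (k : ℕ∞)
      rw [← Nat.cast_add]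
      congr 1
      omega
    · rintro ⟨e', ⟨h0, k, rfl, hQ⟩, rfl⟩
      have hk : 0 < k := by exact_mod_cast h0
      refine ⟨?_, t + k, ?_, hQ⟩
      · show (t : ℕ∞) < (t : ℕ∞) + (k : ℕ∞)
        exact_mod_cast Nat.lt_add_of_pos_right hk
      · show (t : ℕ∞) + (k : ℕ∞) = ((t + k : ℕ) : ℕ∞)
        rw [Nat.cast_add]
  rw [himg]
  rcases Set.eq_empty_or_nonempty Sr with h | h
  · rw [h]
    simp
  · apply le_antisymm
    · exact sInf_le ⟨sInf Sr, csInf_mem h, rfl⟩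
    · refine le_sInf ?_
      rintro x ⟨e', he', rfl⟩
      exact add_le_add le_rfl (sInf_le he')

end Stmt5Aux

/-- If the sketching matrices `{S_k}` are i.i.d., then (whenever they
exist) the increments `{τ_ℓ − τ_{ℓ−1}}` are i.i.d., and for any fixed measurable function
`g` of a block, the random variables `γ_ℓ := g(block ℓ)` are i.i.d. across `ℓ`. -/
theorem stmt5 {m n p : ℕ} (A : Matrix (Fin m) (Fin n) ℝ)
    (B Bhalf : Matrix (Fin n) (Fin n) ℝ) (hB : B.PosDef)
    (hBsymm : Bhalfᵀ = Bhalf) (hBsq : Bhalf * Bhalf = B)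
    {Ω : Type*} [MeasurableSpace Ω] (μ : Measure Ω) [IsProbabilityMeasure μ]
    (S : ℕ → Ω → Matrix (Fin m) (Fin p) ℝ)
    (hSmeas : ∀ k, Measurable (S k))
    (hSindep : iIndepFun (m := fun _ => matrixMeasurableSpace) S μ)
    (hSident : ∀ k, IdentDistrib (S k) (S 1) μ μ)
    -- the covering times `τ_ℓ` (with `col(Q_i) = row(S_iᵀ A B^{-1/2})`)
    (τ : ℕ → Ω → ℕ∞) (hτ0 : ∀ a, τ 0 a = 0)
    (hτsucc : ∀ ℓ a, τ (ℓ + 1) a =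
      sInf {e : ℕ∞ | τ ℓ a < e ∧ ∃ k : ℕ, e = (k : ℕ∞) ∧
        (⨆ i ∈ Finset.Icc ((τ ℓ a).toNat + 1) k, rowSpace ((S i a)ᵀ * A * Bhalf⁻¹)) =
          rowSpace (A * Bhalf⁻¹)})
    -- "whenever they exist": the covering times are almost surely finite
    (hfin : ∀ ℓ, ∀ᵐ a ∂μ, τ ℓ a ≠ ⊤)
    -- `g` is a fixed measurable function of a block (it only depends on the block length
    -- and on the block entries)
    (g : ℕ∞ × (ℕ → Matrix (Fin m) (Fin p) ℝ) → ℝ) (hg : Measurable g)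
    (hgblock : ∀ (d : ℕ∞) (f f' : ℕ → Matrix (Fin m) (Fin p) ℝ),
      (∀ j : ℕ, (j : ℕ∞) < d → f j = f' j) → g (d, f) = g (d, f')) :
    (iIndepFun (fun ℓ a => τ (ℓ + 1) a - τ ℓ a) μ ∧
      ∀ ℓ, IdentDistrib (fun a => τ (ℓ + 1) a - τ ℓ a) (fun a => τ 1 a - τ 0 a) μ μ) ∧
    (iIndepFun
        (fun ℓ a => g (τ (ℓ + 1) a - τ ℓ a, fun j => S ((τ ℓ a).toNat + 1 + j) a)) μ ∧
      ∀ ℓ, IdentDistrib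
        (fun a => g (τ (ℓ + 1) a - τ ℓ a, fun j => S ((τ ℓ a).toNat + 1 + j) a))
        (fun a => g (τ 1 a - τ 0 a, fun j => S ((τ 0 a).toNat + 1 + j) a)) μ μ) := by
  classical
  -- the block random variables
  let Y : ℕ → Ω → ℕ∞ × ℝ := fun ℓ a =>
    (τ (ℓ + 1) a - τ ℓ a,
      g (τ (ℓ + 1) a - τ ℓ a, fun j => S ((τ ℓ a).toNat + 1 + j) a))
  have hfin' : ∀ ℓ, μ {a | τ ℓ a = ⊤} = 0 := by
    intro ℓ
    have h := hfin ℓ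
    rw [ae_iff] at h
    simpa using h
  -- τ is absorbing at ⊤
  have tau_top : ∀ ℓ a, τ ℓ a = ⊤ → τ (ℓ + 1) a = ⊤ := by
    intro ℓ a h
    rw [hτsucc ℓ a, h]
    have hempty : {e : ℕ∞ | (⊤ : ℕ∞) < e ∧ ∃ k : ℕ, e = (k : ℕ∞) ∧
        (⨆ i ∈ Finset.Icc ((⊤ : ℕ∞).toNat + 1) k, rowSpace ((S i a)ᵀ * A * Bhalf⁻¹)) =
          rowSpace (A * Bhalf⁻¹)} = ∅ := by
      ext e
      simp only [Set.mem_setOf_eq, Set.mem_empty_iff_false, iff_false, not_and]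
      exact fun he => absurd he not_top_lt
    rw [hempty, sInf_empty]
  -- the recursion in terms of `dF` and `Wt`
  have tau_succ : ∀ ℓ a (t : ℕ), τ ℓ a = (t : ℕ∞) →
      τ (ℓ + 1) a = (t : ℕ∞) + Stmt5Aux.dF A Bhalf (Stmt5Aux.Wt S t a) := by
    intro ℓ a t ht
    rw [hτsucc ℓ a, ht]
    simp only [ENat.toNat_coe]
    rw [Stmt5Aux.sInf_translate t (fun k =>
      (⨆ i ∈ Finset.Icc (t + 1) k, rowSpace ((S i a)ᵀ * A * Bhalf⁻¹)) =
        rowSpace (A * Bhalf⁻¹))]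
    congr 1
    rw [Stmt5Aux.dF]
    congr 1
    ext e
    simp only [Set.mem_setOf_eq]
    constructor
    · rintro ⟨h0, k, rfl, hP⟩
      refine ⟨h0, k, rfl, ?_⟩
      rw [Stmt5Aux.goodSet, Set.mem_setOf_eq]
      rw [Stmt5Aux.iSup_Icc_reindex (fun i => rowSpace ((S i a)ᵀ * A * Bhalf⁻¹)) t k] at hP
      exact hP
    · rintro ⟨h0, k, rfl, hP⟩
      refine ⟨h0, k, rfl, ?_⟩
      rw [Stmt5Aux.goodSet, Set.mem_setOf_eq] at hP
      rw [Stmt5Aux.iSup_Icc_reindex (fun i => rowSpace ((S i a)ᵀ * A * Bhalf⁻¹)) t k]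
      exact hP
  have inc_eq : ∀ ℓ a (t : ℕ), τ ℓ a = (t : ℕ∞) →
      τ (ℓ + 1) a - τ ℓ a = Stmt5Aux.dF A Bhalf (Stmt5Aux.Wt S t a) := by
    intro ℓ a t ht
    rw [tau_succ ℓ a t ht, ht, Stmt5Aux.enat_add_sub_cancel]
  have Y_eq : ∀ ℓ a (t : ℕ), τ ℓ a = (t : ℕ∞) →
      Y ℓ a = Stmt5Aux.Phi A Bhalf g (Stmt5Aux.Wt S t a) := by
    intro ℓ a t ht
    have h1 := inc_eq ℓ a t ht
    show (τ (ℓ + 1) a - τ ℓ a,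
      g (τ (ℓ + 1) a - τ ℓ a, fun j => S ((τ ℓ a).toNat + 1 + j) a)) = _
    rw [h1, ht, Stmt5Aux.Phi]
    simp only [ENat.toNat_coe]
    rfl
  -- Lemma I : past events are `sigT`-measurable
  have memI : ∀ (L : ℕ) (E : ℕ → Set (ℕ∞ × ℝ)), (∀ j, MeasurableSet (E j)) → ∀ t : ℕ,
      MeasurableSet[Stmt5Aux.sigT S t]
        ({a | τ L a = (t : ℕ∞)} ∩ ⋂ j ∈ Finset.range L, {a | Y j a ∈ E j}) := by
    intro L
    induction L with
    | zero =>
      intro E hE t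
      cases t with
      | zero =>
        have h0 : ({a : Ω | τ 0 a = ((0 : ℕ) : ℕ∞)} ∩
            ⋂ j ∈ Finset.range 0, {a | Y j a ∈ E j}) = Set.univ := by
          ext a
          simp [hτ0]
        rw [h0]
        exact @MeasurableSet.univ Ω (Stmt5Aux.sigT S 0)
      | succ t =>
        have h0 : ({a : Ω | τ 0 a = ((t + 1 : ℕ) : ℕ∞)} ∩
            ⋂ j ∈ Finset.range 0, {a | Y j a ∈ E j}) = ∅ := by
          ext a
          simp only [Finset.range_zero, Finset.notMem_empty, Set.iInter_of_empty,
            Set.iInter_univ, Set.inter_univ, Set.mem_setOf_eq, Set.mem_empty_iff_false,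
            iff_false, hτ0]
          intro hc
          have : (0 : ℕ) = t + 1 := by exact_mod_cast hc
          omega
        rw [h0]
        exact @MeasurableSet.empty Ω (Stmt5Aux.sigT S (t + 1))
    | succ L ih =>
      intro E hE t'
      have hset : ({a | τ (L + 1) a = (t' : ℕ∞)} ∩
            ⋂ j ∈ Finset.range (L + 1), {a | Y j a ∈ E j}) =
          ⋃ t ∈ Finset.range t',
            (({a | τ L a = (t : ℕ∞)} ∩ ⋂ j ∈ Finset.range L, {a | Y j a ∈ E j}) ∩
              Stmt5Aux.Wt S t ⁻¹' (Stmt5Aux.blockSet A Bhalf g (t' - t) (E L))) := by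
        ext a
        simp only [Set.mem_inter_iff, Set.mem_setOf_eq, Set.mem_iUnion, Set.mem_preimage,
          Finset.mem_range, Set.mem_iInter, exists_prop]
        constructor
        · rintro ⟨hτ', hJ⟩
          have hLfin : τ L a ≠ ⊤ := by
            intro h
            rw [tau_top L a h] at hτ'
            simp at hτ'
          obtain ⟨t, ht⟩ : ∃ t : ℕ, τ L a = (t : ℕ∞) := by
            cases hx : τ L a with
            | top => exact absurd hx hLfin
            | coe t => exact ⟨t, rfl⟩
          have hsucc := tau_succ L a t ht
          rw [hτ'] at hsucc
          cases hdF : Stmt5Aux.dF A Bhalf (Stmt5Aux.Wt S t a) with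
          | top =>
            rw [hdF] at hsucc
            simp at hsucc
          | coe δ =>
            rw [hdF] at hsucc
            have htt' : t' = t + δ := by exact_mod_cast hsucc
            have hδpos : 0 < δ := by
              have h1 := Stmt5Aux.one_le_dF A Bhalf (Stmt5Aux.Wt S t a)
              rw [hdF] at h1
              exact_mod_cast h1
            refine ⟨t, by omega, ⟨ht, fun j hj => hJ j (by omega)⟩, ?_, ?_⟩
            · rw [show t' - t = δ by omega]
              exact hdF
            · rw [← Y_eq L a t ht]
              exact hJ L (by omega)
        · rintro ⟨t, htlt, ⟨ht, hJ⟩, hdF, hPhi⟩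
          have hsucc := tau_succ L a t ht
          rw [hdF] at hsucc
          have hτ' : τ (L + 1) a = (t' : ℕ∞) := by
            rw [hsucc, ← Nat.cast_add]
            congr 1
            omega
          refine ⟨hτ', fun j hj => ?_⟩
          rcases Nat.lt_succ_iff_lt_or_eq.mp hj with hjL | rfl
          · exact hJ j hjL
          · rw [Y_eq j a t ht]
            exact hPhi
      rw [hset]
      refine MeasurableSet.biUnion (Finset.range t').countable_toSet fun t ht => ?_
      have htlt : t < t' := Finset.mem_range.mp ht
      have h1 := Stmt5Aux.sigT_mono S htlt.le _ (ih E hE t)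
      obtain ⟨D, hD, hCeq⟩ :=
        Stmt5Aux.blockSet_cylinder A Bhalf g hg hgblock (t' - t) (E L) (hE L)
      have h2 := Stmt5Aux.mem_sigT_of_cylinder S t (t' - t) D hD
      rw [← hCeq] at h2
      rw [show t + (t' - t) = t' by omega] at h2
      exact h1.inter h2
  -- Lemma II : product formula
  have prodII : ∀ (L : ℕ) (E : ℕ → Set (ℕ∞ × ℝ)), (∀ j, MeasurableSet (E j)) →
      μ (⋂ j ∈ Finset.range L, {a | Y j a ∈ E j}) =
        ∏ j ∈ Finset.range L,
          μ (Stmt5Aux.Wt S 0 ⁻¹' (Stmt5Aux.Phi A Bhalf g ⁻¹' E j)) := by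
    intro L
    induction L with
    | zero => intro E hE; simp
    | succ L ih =>
      intro E hE
      have hPhiMeas := Stmt5Aux.measurable_Phi A Bhalf g hg
      have hsplit : (⋂ j ∈ Finset.range (L + 1), {a | Y j a ∈ E j}) =
          (⋂ j ∈ Finset.range L, {a | Y j a ∈ E j}) ∩ {a | Y L a ∈ E L} := by
        ext a
        simp only [Set.mem_iInter, Set.mem_inter_iff, Set.mem_setOf_eq, Finset.mem_range]
        constructor
        · intro h
          exact ⟨fun j hj => h j (by omega), h L (by omega)⟩
        · rintro ⟨h1, h2⟩ j hj
          rcases Nat.lt_succ_iff_lt_or_eq.mp hj with hjL | rfl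
          · exact h1 j hjL
          · exact h2
      have hXsplit : ∀ X : Set Ω, μ X = μ (X ∩ {a | τ L a ≠ ⊤}) := by
        intro X
        apply le_antisymm
        · have heq1 : μ X = μ ((X ∩ {a | τ L a ≠ ⊤}) ∪ (X ∩ {a | τ L a = ⊤})) := by
            congr 1
            rw [← Set.inter_union_distrib_left]
            have huniv : {a | τ L a ≠ ⊤} ∪ {a | τ L a = ⊤} = Set.univ := by
              ext a
              simp [em']
            rw [huniv, Set.inter_univ]
          have hle1 : μ ((X ∩ {a | τ L a ≠ ⊤}) ∪ (X ∩ {a | τ L a = ⊤})) ≤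
              μ (X ∩ {a | τ L a ≠ ⊤}) + μ (X ∩ {a | τ L a = ⊤}) := measure_union_le _ _
          have hz : μ (X ∩ {a | τ L a = ⊤}) = 0 := by
            apply le_antisymm _ (zero_le)
            calc μ (X ∩ {a | τ L a = ⊤}) ≤ μ {a | τ L a = ⊤} :=
                  measure_mono Set.inter_subset_right
              _ = 0 := hfin' L
          rw [heq1]
          rw [hz, add_zero] at hle1
          exact hle1
        · exact measure_mono Set.inter_subset_left
      have hterm : ∀ t : ℕ,
          (⋂ j ∈ Finset.range L, {a | Y j a ∈ E j}) ∩ {a | Y L a ∈ E L} ∩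
            {a | τ L a = (t : ℕ∞)} =
          ({a | τ L a = (t : ℕ∞)} ∩ ⋂ j ∈ Finset.range L, {a | Y j a ∈ E j}) ∩
            (Stmt5Aux.Wt S t ⁻¹' (Stmt5Aux.Phi A Bhalf g ⁻¹' E L)) := by
        intro t
        ext a
        simp only [Set.mem_inter_iff, Set.mem_setOf_eq, Set.mem_preimage]
        constructor
        · rintro ⟨⟨hZ, hYL⟩, ht⟩
          refine ⟨⟨ht, hZ⟩, ?_⟩
          rw [← Y_eq L a t ht]
          exact hYL
        · rintro ⟨⟨ht, hZ⟩, hW⟩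
          refine ⟨⟨hZ, ?_⟩, ht⟩
          rw [Y_eq L a t ht]
          exact hW
      have hAmeas : ∀ t : ℕ, MeasurableSet
          ({a | τ L a = (t : ℕ∞)} ∩ ⋂ j ∈ Finset.range L, {a | Y j a ∈ E j}) :=
        fun t => Stmt5Aux.sigT_le S hSmeas t _ (memI L E hE t)
      have hWmeas : ∀ t : ℕ, MeasurableSet
          (Stmt5Aux.Wt S t ⁻¹' (Stmt5Aux.Phi A Bhalf g ⁻¹' E L)) :=
        fun t => Stmt5Aux.measurable_Wt S hSmeas t (hPhiMeas (hE L))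
      have hUnion : ((⋂ j ∈ Finset.range L, {a | Y j a ∈ E j}) ∩ {a | Y L a ∈ E L}) ∩
          {a | τ L a ≠ ⊤} = ⋃ t : ℕ,
            (({a | τ L a = (t : ℕ∞)} ∩ ⋂ j ∈ Finset.range L, {a | Y j a ∈ E j}) ∩
              (Stmt5Aux.Wt S t ⁻¹' (Stmt5Aux.Phi A Bhalf g ⁻¹' E L))) := by
        ext a
        simp only [Set.mem_inter_iff, Set.mem_setOf_eq, Set.mem_iUnion]
        constructor
        · rintro ⟨hZY, hne⟩
          obtain ⟨t, ht⟩ : ∃ t : ℕ, τ L a = (t : ℕ∞) := by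
            cases hx : τ L a with
            | top => exact absurd hx hne
            | coe t => exact ⟨t, rfl⟩
          refine ⟨t, ?_⟩
          have := (hterm t).le ⟨hZY, ht⟩
          exact this
        · rintro ⟨t, hmem⟩
          have := (hterm t).ge hmem
          obtain ⟨hZY, ht⟩ := this
          exact ⟨hZY, by rw [ht]; simp⟩
      have hdisj : Pairwise (Function.onFun Disjoint fun t : ℕ =>
          (({a | τ L a = (t : ℕ∞)} ∩ ⋂ j ∈ Finset.range L, {a | Y j a ∈ E j}) ∩
            (Stmt5Aux.Wt S t ⁻¹' (Stmt5Aux.Phi A Bhalf g ⁻¹' E L)))) := by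
        intro s t hst
        rw [Function.onFun, Set.disjoint_left]
        rintro a ⟨⟨hs, -⟩, -⟩ ⟨⟨ht, -⟩, -⟩
        have hs' : τ L a = (s : ℕ∞) := hs
        have ht' : τ L a = (t : ℕ∞) := ht
        rw [hs'] at ht'
        exact hst (by exact_mod_cast ht')
      have hsum : μ ((⋂ j ∈ Finset.range L, {a | Y j a ∈ E j}) ∩ {a | Y L a ∈ E L}) =
          ∑' t : ℕ, μ
            (({a | τ L a = (t : ℕ∞)} ∩ ⋂ j ∈ Finset.range L, {a | Y j a ∈ E j}) ∩
              (Stmt5Aux.Wt S t ⁻¹' (Stmt5Aux.Phi A Bhalf g ⁻¹' E L))) := by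
        rw [hXsplit _, hUnion]
        exact measure_iUnion hdisj fun t => ((hAmeas t).inter (hWmeas t))
      have hfactor : ∀ t : ℕ, μ
            (({a | τ L a = (t : ℕ∞)} ∩ ⋂ j ∈ Finset.range L, {a | Y j a ∈ E j}) ∩
              (Stmt5Aux.Wt S t ⁻¹' (Stmt5Aux.Phi A Bhalf g ⁻¹' E L))) =
          μ ({a | τ L a = (t : ℕ∞)} ∩ ⋂ j ∈ Finset.range L, {a | Y j a ∈ E j}) *
            μ (Stmt5Aux.Wt S 0 ⁻¹' (Stmt5Aux.Phi A Bhalf g ⁻¹' E L)) := by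
        intro t
        have hindep := Stmt5Aux.indep_sigT_Wt S μ hSmeas hSindep t
        rw [Indep_iff] at hindep
        rw [hindep _ _ (memI L E hE t) ⟨_, hPhiMeas (hE L), rfl⟩,
          Stmt5Aux.measure_Wt_preimage S μ hSmeas hSindep hSident t _ (hPhiMeas (hE L))]
      have hsumA : (∑' t : ℕ, μ
            ({a | τ L a = (t : ℕ∞)} ∩ ⋂ j ∈ Finset.range L, {a | Y j a ∈ E j})) =
          μ (⋂ j ∈ Finset.range L, {a | Y j a ∈ E j}) := by
        rw [hXsplit (⋂ j ∈ Finset.range L, {a | Y j a ∈ E j})]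
        have hU2 : (⋂ j ∈ Finset.range L, {a | Y j a ∈ E j}) ∩ {a | τ L a ≠ ⊤} =
            ⋃ t : ℕ, ({a | τ L a = (t : ℕ∞)} ∩ ⋂ j ∈ Finset.range L, {a | Y j a ∈ E j}) := by
          ext a
          simp only [Set.mem_inter_iff, Set.mem_setOf_eq, Set.mem_iUnion]
          constructor
          · rintro ⟨hZ, hne⟩
            obtain ⟨t, ht⟩ : ∃ t : ℕ, τ L a = (t : ℕ∞) := by
              cases hx : τ L a with
              | top => exact absurd hx hne
              | coe t => exact ⟨t, rfl⟩
            exact ⟨t, ht, hZ⟩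
          · rintro ⟨t, ht, hZ⟩
            exact ⟨hZ, by rw [ht]; simp⟩
        rw [hU2]
        refine (measure_iUnion ?_ hAmeas).symm
        intro s t hst
        rw [Function.onFun, Set.disjoint_left]
        rintro a ⟨hs, -⟩ ⟨ht, -⟩
        have hs' : τ L a = (s : ℕ∞) := hs
        have ht' : τ L a = (t : ℕ∞) := ht
        rw [hs'] at ht'
        exact hst (by exact_mod_cast ht')
      rw [hsplit, hsum]
      calc (∑' t : ℕ, μ
            (({a | τ L a = (t : ℕ∞)} ∩ ⋂ j ∈ Finset.range L, {a | Y j a ∈ E j}) ∩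
              (Stmt5Aux.Wt S t ⁻¹' (Stmt5Aux.Phi A Bhalf g ⁻¹' E L)))) =
          (∑' t : ℕ, μ ({a | τ L a = (t : ℕ∞)} ∩
              ⋂ j ∈ Finset.range L, {a | Y j a ∈ E j})) *
            μ (Stmt5Aux.Wt S 0 ⁻¹' (Stmt5Aux.Phi A Bhalf g ⁻¹' E L)) := by
            rw [← ENNReal.tsum_mul_right]
            exact tsum_congr hfactor
        _ = μ (⋂ j ∈ Finset.range L, {a | Y j a ∈ E j}) *
            μ (Stmt5Aux.Wt S 0 ⁻¹' (Stmt5Aux.Phi A Bhalf g ⁻¹' E L)) := by rw [hsumA]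
        _ = ∏ j ∈ Finset.range (L + 1),
            μ (Stmt5Aux.Wt S 0 ⁻¹' (Stmt5Aux.Phi A Bhalf g ⁻¹' E j)) := by
            rw [ih E hE, Finset.prod_range_succ]
  -- single-variable law
  have measY_eq : ∀ (ℓ : ℕ) (E : Set (ℕ∞ × ℝ)), MeasurableSet E →
      μ (Y ℓ ⁻¹' E) = μ (Stmt5Aux.Wt S 0 ⁻¹' (Stmt5Aux.Phi A Bhalf g ⁻¹' E)) := by
    intro ℓ E hE
    have hE' : ∀ j, MeasurableSet (if j = ℓ then E else Set.univ) := by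
      intro j
      by_cases hj : j = ℓ <;> simp [hj, hE]
    have h := prodII (ℓ + 1) (fun j => if j = ℓ then E else Set.univ) hE'
    have hset : (⋂ j ∈ Finset.range (ℓ + 1),
        {a | Y j a ∈ (if j = ℓ then E else Set.univ)}) = Y ℓ ⁻¹' E := by
      ext a
      simp only [Set.mem_iInter, Set.mem_setOf_eq, Set.mem_preimage, Finset.mem_range]
      constructor
      · intro h
        have := h ℓ (by omega)
        simpa using this
      · intro h j hj
        by_cases hjℓ : j = ℓ
        · subst hjℓ; simpa using h
        · simp [hjℓ]
    rw [hset] at h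
    rw [h]
    rw [Finset.prod_eq_single ℓ
      (fun j _ hjℓ => by simp [hjℓ])
      (fun hℓ => absurd (Finset.self_mem_range_succ ℓ) hℓ)]
    simp
  -- measurability of τ and Y
  have meas_tau_eq : ∀ (L t : ℕ), MeasurableSet {a | τ L a = (t : ℕ∞)} := by
    intro L t
    have h := memI L (fun _ => Set.univ) (fun _ => MeasurableSet.univ) t
    have h2 : ({a | τ L a = (t : ℕ∞)} ∩
        ⋂ j ∈ Finset.range L, {a | Y j a ∈ Set.univ}) = {a | τ L a = (t : ℕ∞)} := by
      simp
    rw [h2] at h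
    exact Stmt5Aux.sigT_le S hSmeas t _ h
  have measurable_tau : ∀ L, Measurable (fun a => τ L a) := by
    intro L
    apply measurable_to_countable'
    intro e
    cases e with
    | top =>
      have heq : (fun a => τ L a) ⁻¹' {⊤} = (⋃ t : ℕ, {a | τ L a = (t : ℕ∞)})ᶜ := by
        ext a
        simp only [Set.mem_preimage, Set.mem_singleton_iff, Set.mem_compl_iff,
          Set.mem_iUnion, Set.mem_setOf_eq]
        constructor
        · intro h
          rw [h]
          rintro ⟨t, ht⟩
          simp at ht
        · intro h
          cases hx : τ L a with
          | top => rfl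
          | coe t => exact absurd ⟨t, hx⟩ h
      rw [heq]
      exact (MeasurableSet.iUnion fun t => meas_tau_eq L t).compl
    | coe t =>
      have heq : (fun a => τ L a) ⁻¹' {(t : ℕ∞)} = {a | τ L a = (t : ℕ∞)} := rfl
      rw [heq]
      exact meas_tau_eq L t
  have measurable_Y : ∀ ℓ, Measurable (Y ℓ) := by
    intro ℓ
    have hτℓ := measurable_tau ℓ
    have hτℓ' := measurable_tau (ℓ + 1)
    have hinc : Measurable (fun a => τ (ℓ + 1) a - τ ℓ a) := by
      have hsub : Measurable (fun q : ℕ∞ × ℕ∞ => q.1 - q.2) := measurable_of_countable _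
      exact hsub.comp (hτℓ'.prodMk hτℓ)
    have htoNat : Measurable (fun a => (τ ℓ a).toNat) :=
      (measurable_of_countable _).comp hτℓ
    have hblockmeas : Measurable (fun a => (fun j => S ((τ ℓ a).toNat + 1 + j) a)) := by
      refine measurable_pi_lambda _ fun j => ?_
      have hF : Measurable (fun q : Ω × ℕ => S (q.2 + 1 + j) q.1) :=
        measurable_from_prod_countable_left fun t => hSmeas (t + 1 + j)
      exact hF.comp (measurable_id.prodMk htoNat)
    exact hinc.prodMk (hg.comp (hinc.prodMk hblockmeas))
  -- identical distribution of the Y's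
  have hYident : ∀ ℓ, IdentDistrib (Y ℓ) (Y 0) μ μ := by
    intro ℓ
    refine ⟨(measurable_Y ℓ).aemeasurable, (measurable_Y 0).aemeasurable, ?_⟩
    refine Measure.ext fun E hE => ?_
    rw [Measure.map_apply (measurable_Y ℓ) hE, Measure.map_apply (measurable_Y 0) hE,
      measY_eq ℓ E hE, measY_eq 0 E hE]
  -- independence of the Y's
  have hYindep : iIndepFun Y μ := by
    rw [iIndepFun_iff_measure_inter_preimage_eq_mul]
    intro F sets H
    set L := F.sup id + 1 with hL
    have hFL : ∀ j ∈ F, j < L := fun j hj =>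
      Nat.lt_succ_of_le (Finset.le_sup (f := id) hj)
    have hE'm : ∀ j, MeasurableSet (if j ∈ F then sets j else Set.univ) := by
      intro j
      by_cases hj : j ∈ F <;> simp [hj]
      exact H j hj
    have h := prodII L (fun j => if j ∈ F then sets j else Set.univ) hE'm
    have hseteq : (⋂ j ∈ Finset.range L,
        {a | Y j a ∈ (if j ∈ F then sets j else Set.univ)}) = ⋂ j ∈ F, Y j ⁻¹' sets j := by
      ext a
      simp only [Set.mem_iInter, Set.mem_setOf_eq, Set.mem_preimage, Finset.mem_range]
      constructor
      · intro h j hj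
        have := h j (hFL j hj)
        simpa [hj] using this
      · intro h j _
        by_cases hj : j ∈ F
        · simpa [hj] using h j hj
        · simp [hj]
    rw [hseteq] at h
    rw [h]
    rw [← Finset.prod_subset (fun j hj => Finset.mem_range.mpr (hFL j hj))
      (fun j _ hj => by simp [hj])]
    refine Finset.prod_congr rfl fun j hj => ?_
    rw [measY_eq j (sets j) (H j hj)]
    congr 1
    simp [hj]
  -- conclude
  refine ⟨⟨hYindep.comp (fun _ => Prod.fst) (fun _ => measurable_fst), fun ℓ =>
    (hYident ℓ).comp measurable_fst⟩,
    ⟨hYindep.comp (fun _ => Prod.snd) (fun _ => measurable_snd), fun ℓ =>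
    (hYident ℓ).comp measurable_snd⟩⟩

end
end

section
/- Suppose the random m×p matrix S₁ satisfies the (C,ω) sub-exponential JL property and p > (log 2 / C)·max{ω², 1/δ²} for some δ ∈ (0,1). Then for every nonzero z ∈ row(AB^{-1/2}): P(‖S₁^⊤AB^{-1/2}z‖₂² > 0) ≥ 1 − 2exp(−min{Cpδ², Cpδ/ω}) > 0. -/
open MeasureTheory ProbabilityTheory Matrix Finset Filter

noncomputable section

set_option maxHeartbeats 1000000 in
/-- If `S₁` satisfies the `(C,ω)` sub-exponential JL property and
`p > (log 2 / C)·max{ω², 1/δ²}` for some `δ ∈ (0,1)`, then for every nonzero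
`z ∈ row(AB^{-1/2})`:
`P(‖S₁ᵀ A B^{-1/2} z‖₂² > 0) ≥ 1 − 2 exp(−min{Cpδ², Cpδ/ω}) > 0`. -/
theorem stmt7 {m n p : ℕ} (A : Matrix (Fin m) (Fin n) ℝ)
    (B Bhalf : Matrix (Fin n) (Fin n) ℝ) (hB : B.PosDef)
    (hBsymm : Bhalfᵀ = Bhalf) (hBsq : Bhalf * Bhalf = B)
    {Ω : Type*} [MeasurableSpace Ω] (μ : Measure Ω) [IsProbabilityMeasure μ]
    (S₁ : Ω → Matrix (Fin m) (Fin p) ℝ) (hSmeas : Measurable S₁)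
    (C ω : ℝ) (hJL : jlProperty μ S₁ C ω)
    (δ : ℝ) (hδ : δ ∈ Set.Ioo (0 : ℝ) 1)
    (hp : (p : ℝ) > Real.log 2 / C * max (ω ^ 2) (1 / δ ^ 2))
    (z : Fin n → ℝ) (hz : z ∈ rowSpace (A * Bhalf⁻¹)) (hz0 : z ≠ 0) :
    ENNReal.ofReal (1 - 2 * Real.exp (-min (C * p * δ ^ 2) (C * p * δ / ω))) ≤
      μ {a | 0 < nrm2 ((S₁ a)ᵀ *ᵥ ((A * Bhalf⁻¹) *ᵥ z)) ^ 2} ∧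
    0 < 1 - 2 * Real.exp (-min (C * p * δ ^ 2) (C * p * δ / ω)) := by
  obtain ⟨hC, hω, hJL'⟩ := hJL
  obtain ⟨hδ0, hδ1⟩ := hδ
  set M := A * Bhalf⁻¹ with hM
  set w := M *ᵥ z with hw
  -- w ≠ 0
  have hwne : w ≠ 0 := by
    rw [rowSpace, show Set.range M = Set.range M.row from rfl, ← range_vecMulLinear] at hz
    obtain ⟨u, hu⟩ := hz
    intro h0
    apply hz0
    have h1 : z = Mᵀ *ᵥ u := by
      rw [← hu, Matrix.vecMulLinear_apply, Matrix.mulVec_transpose]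
    have hzz : z ⬝ᵥ z = 0 := by
      calc z ⬝ᵥ z = (Mᵀ *ᵥ u) ⬝ᵥ z := by rw [← h1]
        _ = u ⬝ᵥ (M *ᵥ z) := by
            rw [Matrix.dotProduct_mulVec, Matrix.mulVec_transpose]
        _ = 0 := by rw [← hw, h0]; simp
    exact (dotProduct_self_eq_zero).mp hzz
  clear_value w M
  have hnrm2sq : ∀ {a : ℕ} (v : Fin a → ℝ), nrm2 v ^ 2 = ∑ i, v i ^ 2 := by
    intro a v
    exact Real.sq_sqrt (by positivity)
  have hwpos : 0 < nrm2 w ^ 2 := by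
    rw [hnrm2sq]
    obtain ⟨i, hi⟩ := Function.ne_iff.mp hwne
    refine Finset.sum_pos' (fun j _ => sq_nonneg _) ⟨i, Finset.mem_univ i, ?_⟩
    simpa [sq_abs] using pow_pos (abs_pos.mpr hi) 2
  -- the key numeric bound : log 2 < min (C*p*δ^2) (C*p*δ/ω)
  have hmaxpos : 0 < max (ω ^ 2) (1 / δ ^ 2) := lt_max_of_lt_left (by positivity)
  have hlog2 : 0 < Real.log 2 := Real.log_pos (by norm_num)
  have hd2 : 0 < δ ^ 2 := by positivity
  have hCp : Real.log 2 * max (ω ^ 2) (1 / δ ^ 2) < C * p := by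
    have h := mul_lt_mul_of_pos_left hp hC
    have heq : C * (Real.log 2 / C * max (ω ^ 2) (1 / δ ^ 2)) =
        Real.log 2 * max (ω ^ 2) (1 / δ ^ 2) := by
      field_simp
    linarith [h, heq.ge, heq.le]
  have hm1 : (1 / δ ^ 2) ≤ max (ω ^ 2) (1 / δ ^ 2) := le_max_right _ _
  have hm2 : ω ^ 2 ≤ max (ω ^ 2) (1 / δ ^ 2) := le_max_left _ _
  have hkey : Real.log 2 < min (C * p * δ ^ 2) (C * p * δ / ω) := by
    have h1 : Real.log 2 < C * p * δ ^ 2 := by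
      have h := mul_lt_mul_of_pos_right hCp hd2
      have k1 : 0 ≤ Real.log 2 * δ ^ 2 * (max (ω ^ 2) (1 / δ ^ 2) - 1 / δ ^ 2) :=
        mul_nonneg (mul_nonneg hlog2.le hd2.le) (sub_nonneg.mpr hm1)
      have k2 : Real.log 2 * (1 / δ ^ 2) * δ ^ 2 = Real.log 2 := by
        field_simp
      nlinarith [h, k1, k2]
    have h2 : Real.log 2 < C * p * δ / ω := by
      rw [lt_div_iff₀ hω]
      have h := mul_lt_mul_of_pos_right hCp hδ0
      rcases le_or_gt 1 (ω * δ) with hωδ | hωδ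
      · have k1 : 0 ≤ Real.log 2 * δ * (max (ω ^ 2) (1 / δ ^ 2) - ω ^ 2) :=
          mul_nonneg (mul_nonneg hlog2.le hδ0.le) (sub_nonneg.mpr hm2)
        have k2 : 0 ≤ Real.log 2 * ω * (ω * δ - 1) :=
          mul_nonneg (mul_nonneg hlog2.le hω.le) (sub_nonneg.mpr hωδ)
        nlinarith [h, k1, k2]
      · have k1 : 0 ≤ Real.log 2 * δ * (max (ω ^ 2) (1 / δ ^ 2) - 1 / δ ^ 2) :=
          mul_nonneg (mul_nonneg hlog2.le hδ0.le) (sub_nonneg.mpr hm1)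
        have k3 : Real.log 2 * (1 / δ ^ 2) * δ = Real.log 2 / δ := by
          field_simp
        have k4 : Real.log 2 * ω < Real.log 2 / δ := by
          rw [lt_div_iff₀ hδ0]
          nlinarith [hωδ, hlog2]
        nlinarith [h, k1, k3.ge, k3.le, k4]
    exact lt_min h1 h2
  have hhalf : Real.exp (-Real.log 2) = 1 / 2 := by
    rw [Real.exp_neg, Real.exp_log] <;> norm_num
  have hexp : 2 * Real.exp (-min (C * p * δ ^ 2) (C * p * δ / ω)) < 1 := by
    have hlt : Real.exp (-min (C * p * δ ^ 2) (C * p * δ / ω)) < Real.exp (-Real.log 2) :=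
      Real.exp_lt_exp.mpr (by linarith)
    rw [hhalf] at hlt
    linarith
  have hexpnn : 0 ≤ 2 * Real.exp (-min (C * p * δ ^ 2) (C * p * δ / ω)) := by positivity
  refine ⟨?_, by linarith⟩
  -- measure bound
  set E := 2 * Real.exp (-min (C * p * δ ^ 2) (C * p * δ / ω)) with hE
  have hbad := (hJL' w).2 δ hδ0
  set bad := {a | δ * nrm2 w ^ 2 < |nrm2 ((S₁ a)ᵀ *ᵥ w) ^ 2 - nrm2 w ^ 2|} with hbadset
  set good := {a : Ω | 0 < nrm2 ((S₁ a)ᵀ *ᵥ w) ^ 2} with hgoodset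
  have hsub : (Set.univ : Set Ω) ⊆ good ∪ bad := by
    intro a _
    by_cases hab : a ∈ bad
    · exact Or.inr hab
    · left
      have hab' : |nrm2 ((S₁ a)ᵀ *ᵥ w) ^ 2 - nrm2 w ^ 2| ≤ δ * nrm2 w ^ 2 :=
        not_lt.mp (by simpa [hbadset] using hab)
      have h := (abs_le.mp hab').1
      show 0 < nrm2 ((S₁ a)ᵀ *ᵥ w) ^ 2
      nlinarith [h, hwpos, mul_pos (show (0:ℝ) < 1 - δ by linarith) hwpos]
  have h1le : (1 : ENNReal) ≤ μ good + μ bad := by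
    calc (1 : ENNReal) = μ Set.univ := (measure_univ (μ := μ)).symm
      _ ≤ μ (good ∪ bad) := measure_mono hsub
      _ ≤ μ good + μ bad := measure_union_le _ _
  have hfinal : (1 : ENNReal) - μ bad ≤ μ good := tsub_le_iff_right.mpr h1le
  calc ENNReal.ofReal (1 - E) = ENNReal.ofReal 1 - ENNReal.ofReal E :=
        ENNReal.ofReal_sub 1 hexpnn
    _ = 1 - ENNReal.ofReal E := by rw [ENNReal.ofReal_one]
    _ ≤ 1 - μ bad := tsub_le_tsub_left hbad 1
    _ ≤ μ good := hfinal

end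
end
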